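/- arXiv:1706.01259 — 3 statements merged into one kernel-verified Lean document; each statement's English description precedes it below -/
import Mathlib

section
/- Let T be a finite simplicial complex, v a vertex of T, n ∈ ℕ, S the subcomplex triangulating the closed star of v, and G an abelian group. Then every simplicial n-cycle z ∈ Z_n(S^{(n)}; G) can be written as a finite sum z = Σ g_i · ∂σ_i, where σ_1, ..., σ_m are the (n+1)-simplexes of T having v as a vertex and g_i ∈ G. -/
noncomputable section

/-- The simplicial boundary operator on `G`-chains of finite sets of vertices,
with signs determined by the linear order on the vertices. -/
def simpBd (G : Type) [AddCommGroup G] (V : Type) [LinearOrder V] :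
    (Finset V →₀ G) →+ (Finset V →₀ G) :=
  Finsupp.liftAddHom fun s =>
    { toFun := fun g => ∑ a ∈ s, Finsupp.single (s.erase a)
        ((-1 : ℤ) ^ ((s.filter (· < a)).card) • g)
      map_zero' := by simp
      map_add' := by intro a b; simp only [smul_add, Finsupp.single_add, Finset.sum_add_distrib] }

/-- Chains supported on the `m`-simplices (sets of `m+1` vertices) of `L`. -/
def simpChainsOn (G : Type) [AddCommGroup G] (V : Type) [LinearOrder V]
    (L : Set (Finset V)) (m : ℕ) : AddSubgroup (Finset V →₀ G) where
  carrier := {c | ∀ s ∈ c.support, s ∈ L ∧ s.card = m + 1}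
  add_mem' := by
    intro a b ha hb s hs
    rcases Finset.mem_union.1 (Finsupp.support_add hs) with h | h
    exacts [ha s h, hb s h]
  zero_mem' := by simp
  neg_mem' := by intro a ha s hs; exact ha s (by simpa using hs)

/-- Simplicial `n`-cycles of the complex `L`. -/
def simpCycles (G : Type) [AddCommGroup G] (V : Type) [LinearOrder V]
    (L : Set (Finset V)) (n : ℕ) : AddSubgroup (Finset V →₀ G) :=
  simpChainsOn G V L n ⊓ (simpBd G V).ker

/-- Simplicial `n`-boundaries of the complex `L`. -/
def simpBoundaries (G : Type) [AddCommGroup G] (V : Type) [LinearOrder V]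
    (L : Set (Finset V)) (n : ℕ) : AddSubgroup (Finset V →₀ G) :=
  AddSubgroup.map (simpBd G V) (simpChainsOn G V L (n + 1))

/-- Simplicial homology `H_n(L; G)`. -/
def simpHomology (G : Type) [AddCommGroup G] (V : Type) [LinearOrder V]
    (L : Set (Finset V)) (n : ℕ) : Type :=
  ↥(simpCycles G V L n) ⧸ ((simpBoundaries G V L n).addSubgroupOf (simpCycles G V L n))

instance (G : Type) [AddCommGroup G] (V : Type) [LinearOrder V]
    (L : Set (Finset V)) (n : ℕ) : AddCommGroup (simpHomology G V L n) := by
  unfold simpHomology; infer_instance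

end

noncomputable section ConeSection

variable (G : Type) [AddCommGroup G] (V : Type) [LinearOrder V] (v : V)

/-- The cone operator with apex `v` on chains. -/
def coneOp : (Finset V →₀ G) →+ (Finset V →₀ G) :=
  Finsupp.liftAddHom fun s =>
    { toFun := fun g => if v ∈ s then 0 else
        Finsupp.single (insert v s) ((-1 : ℤ) ^ ((s.filter (· < v)).card) • g)
      map_zero' := by simp
      map_add' := by
        intro a b
        split
        · simp
        · simp [smul_add, Finsupp.single_add] }

lemma simpBd_single (s : Finset V) (g : G) :
    simpBd G V (Finsupp.single s g) =
      ∑ a ∈ s, Finsupp.single (s.erase a) ((-1 : ℤ) ^ ((s.filter (· < a)).card) • g) :=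
  Finsupp.liftAddHom_apply_single _ _ _

lemma coneOp_single (s : Finset V) (g : G) :
    coneOp G V v (Finsupp.single s g) = if v ∈ s then 0 else
      Finsupp.single (insert v s) ((-1 : ℤ) ^ ((s.filter (· < v)).card) • g) :=
  Finsupp.liftAddHom_apply_single _ _ _

lemma cone_homotopy (c : Finset V →₀ G) :
    simpBd G V (coneOp G V v c) + coneOp G V v (simpBd G V c) = c := by
  have key : (simpBd G V).comp (coneOp G V v) + (coneOp G V v).comp (simpBd G V)
      = AddMonoidHom.id _ := by
    apply Finsupp.addHom_ext
    intro s g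
    simp only [AddMonoidHom.add_apply, AddMonoidHom.coe_comp, Function.comp_apply,
      AddMonoidHom.id_apply, coneOp_single, simpBd_single]
    by_cases hvs : v ∈ s
    · rw [if_pos hvs, map_zero, zero_add, map_sum]
      rw [Finset.sum_eq_single v]
      · rw [coneOp_single, if_neg (by simp), Finset.insert_erase hvs,
          Finset.filter_erase, Finset.erase_eq_of_notMem (by simp), smul_smul,
          ← pow_add, ← two_mul, pow_mul]
        norm_num
      · intro a ha hav
        rw [coneOp_single, if_pos (Finset.mem_erase.2 ⟨(Ne.symm hav), hvs⟩)]
      · intro h; exact absurd hvs h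
    · rw [if_neg hvs, simpBd_single, map_sum]
      have hins : ∀ a ∈ s, v ∉ s.erase a := fun a _ h => hvs (Finset.mem_of_mem_erase h)
      rw [Finset.sum_insert (by simpa using hvs)]
      have hv_term : Finsupp.single ((insert v s).erase v)
          ((-1 : ℤ) ^ (((insert v s).filter (· < v)).card) •
            ((-1 : ℤ) ^ ((s.filter (· < v)).card) • g)) = Finsupp.single s g := by
        rw [Finset.erase_insert hvs, Finset.filter_insert, if_neg (lt_irrefl v),
          smul_smul, ← pow_add, ← two_mul, pow_mul]
        norm_num
      rw [hv_term, add_assoc, add_eq_left, ← Finset.sum_add_distrib]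
      apply Finset.sum_eq_zero
      intro a ha
      have hav : a ≠ v := fun h => hvs (h ▸ ha)
      rw [coneOp_single, if_neg (hins a ha), Finset.erase_insert_of_ne hav.symm,
        Finset.filter_erase, Finset.filter_insert]
      rw [smul_smul, smul_smul, ← pow_add, ← pow_add, ← Finsupp.single_add, ← add_smul]
      refine (congrArg (Finsupp.single _) ?_).trans (Finsupp.single_zero _)
      rcases lt_or_gt_of_ne hav with h | h
      · have hmem : a ∈ s.filter (· < v) := Finset.mem_filter.2 ⟨ha, h⟩
        have hE : ((s.filter (· < v)).erase a).card = (s.filter (· < v)).card - 1 :=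
          Finset.card_erase_of_mem hmem
        have hpos : 0 < (s.filter (· < v)).card := Finset.card_pos.2 ⟨a, hmem⟩
        rw [if_neg (not_lt.2 h.le), hE]
        have he : (s.filter (· < a)).card + (s.filter (· < v)).card =
            ((s.filter (· < v)).card - 1 + (s.filter (· < a)).card) + 1 := by omega
        rw [he, pow_succ]
        ring_nf
        exact zero_smul ℤ g
      · have hnm : a ∉ s.filter (· < v) := by simp [not_lt.2 h.le]
        rw [if_pos h, Finset.erase_eq_of_notMem hnm,
          Finset.card_insert_of_notMem (by simp [hvs])]
        have he : (s.filter (· < a)).card + 1 + (s.filter (· < v)).card =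
            ((s.filter (· < v)).card + (s.filter (· < a)).card) + 1 := by omega
        rw [he, pow_succ]
        ring_nf
        exact zero_smul ℤ g
  calc simpBd G V (coneOp G V v c) + coneOp G V v (simpBd G V c)
      = ((simpBd G V).comp (coneOp G V v) + (coneOp G V v).comp (simpBd G V)) c := rfl
    _ = c := by rw [key]; rfl

end ConeSection


/-- Every simplicial `n`-cycle of the `n`-skeleton of the closed star of
`v` is a combination `Σ gᵢ·∂σᵢ` of boundaries of the `(n+1)`-simplexes of `T` containing `v`. -/
theorem star_skeleton_cycles_are_spanned_by_boundaries
    (V : Type) [LinearOrder V]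
    (K : Finset (Finset V))
    (hne : ∀ s ∈ K, Finset.Nonempty s)
    (hdown : ∀ s ∈ K, ∀ t ⊆ s, t.Nonempty → t ∈ K)
    (v : V) (hv : {v} ∈ K)
    (n : ℕ) (hn : 1 ≤ n)
    (G : Type) [AddCommGroup G]
    (z : Finset V →₀ G)
    (hsupp : ∀ s ∈ z.support, s.card = n + 1 ∧ s ∈ K ∧ ∃ t ∈ K, v ∈ t ∧ s ⊆ t)
    (hcycle : simpBd G V z = 0) :
    ∃ g : Finset V → G,
      z = ∑ σ ∈ K.filter (fun s => v ∈ s ∧ s.card = n + 2),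
        simpBd G V (Finsupp.single σ (g σ)) := by
  classical
  set w := coneOp G V v z with hw
  refine ⟨fun σ => w σ, ?_⟩
  have hzw : z = simpBd G V w := by
    have h1 := cone_homotopy G V v z
    rw [hcycle, map_zero, add_zero] at h1
    rw [hw]; exact h1.symm
  have hrep : w = z.sum (fun s g => if v ∈ s then (0 : Finset V →₀ G) else
      Finsupp.single (insert v s) ((-1 : ℤ) ^ ((s.filter (· < v)).card) • g)) := rfl
  have hsub : w.support ⊆ K.filter (fun s => v ∈ s ∧ s.card = n + 2) := by
    intro σ hσ
    rw [hrep] at hσ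
    obtain ⟨s, hs, hσs⟩ := Finset.mem_biUnion.1 (Finsupp.support_sum hσ)
    by_cases hvs : v ∈ s
    · simp [hvs] at hσs
    · rw [if_neg hvs] at hσs
      have hσeq : σ = insert v s := ((Finsupp.mem_support_single _ _ _).mp hσs).1
      obtain ⟨hcard, hsK, t, htK, hvt, hst⟩ := hsupp s hs
      refine Finset.mem_filter.2 ⟨?_, ?_, ?_⟩
      · rw [hσeq]
        exact hdown t htK _ (Finset.insert_subset hvt hst) ⟨v, Finset.mem_insert_self _ _⟩
      · rw [hσeq]; exact Finset.mem_insert_self _ _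
      · rw [hσeq, Finset.card_insert_of_notMem hvs, hcard]
  have hwsum : w = ∑ σ ∈ K.filter (fun s => v ∈ s ∧ s.card = n + 2),
      Finsupp.single σ (w σ) := by
    conv_lhs => rw [← Finsupp.sum_single w]
    rw [Finsupp.sum]
    exact Finset.sum_subset hsub (fun σ _ hσ => by
      rw [Finsupp.notMem_support_iff.1 hσ, Finsupp.single_zero])
  rw [hzw]
  conv_lhs => rw [hwsum]
  rw [map_sum]
end

section
/- Let T be a finite simplicial complex with a metric d compatible with the topology on |T|. Then for every δ > 0 there exist ε with 0 < ε < δ and a continuous map r : |T| → |T| such that: (1) r(σ) ⊆ σ for every simplex σ ∈ T, and (2) whenever x ∈ |T|, σ ∈ T, and d(x, σ) < ε, then r(x) ∈ σ. -/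
set_option linter.unusedSectionVars false

open Set Finset Metric

noncomputable section
namespace SPR

variable {E : Type} [NormedAddCommGroup E] [NormedSpace ℝ E]

/-- Uniqueness of barycentric weights on an affinely independent finset. -/
lemma weights_unique {t : Finset E} (ht : AffineIndependent ℝ ((↑) : t → E))
    {w₁ w₂ : E → ℝ} (h₁ : ∑ v ∈ t, w₁ v = 1) (h₂ : ∑ v ∈ t, w₂ v = 1)
    (heq : ∑ v ∈ t, w₁ v • v = ∑ v ∈ t, w₂ v • v) : ∀ v ∈ t, w₁ v = w₂ v := by
  classical
  have key := (affineIndependent_iff_eq_of_fintype_affineCombination_eq ℝ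
    ((↑) : t → E)).1 ht (fun i => w₁ i) (fun i => w₂ i) ?_ ?_ ?_
  · intro v hv
    have := congrFun key ⟨v, hv⟩
    simpa using this
  · rw [← Finset.sum_coe_sort t w₁] at h₁; exact h₁
  · rw [← Finset.sum_coe_sort t w₂] at h₂; exact h₂
  · rw [Finset.affineCombination_eq_linear_combination _ _ _ (by
      rw [← Finset.sum_coe_sort t w₁] at h₁; exact h₁),
      Finset.affineCombination_eq_linear_combination _ _ _ (by
      rw [← Finset.sum_coe_sort t w₂] at h₂; exact h₂)]
    rw [← Finset.sum_coe_sort t (fun v => w₁ v • v)] at heq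
    rw [← Finset.sum_coe_sort t (fun v => w₂ v • v)] at heq
    exact heq

/-- The affine evaluation map from the standard simplex to the convex hull. -/
def phi (t : Finset E) (w : stdSimplex ℝ ↥t) : E := ∑ i : ↥t, w.1 i • (i : E)

lemma phi_continuous (t : Finset E) : Continuous (phi t) := by
  apply continuous_finset_sum
  intro i _
  exact ((continuous_apply i).comp continuous_subtype_val).smul continuous_const

lemma phi_mem (t : Finset E) (w : stdSimplex ℝ ↥t) :
    phi t w ∈ convexHull ℝ (t : Set E) := by
  have h := Finset.centerMass_mem_convexHull (Finset.univ : Finset ↥t)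
    (w := fun i => w.1 i) (fun i _ => w.2.1 i) (by rw [w.2.2]; norm_num)
    (z := fun i => (i : E)) (fun i _ => i.2)
  rwa [Finset.centerMass_eq_of_sum_1 _ _ w.2.2] at h

lemma phi_surj (t : Finset E) {x : E} (hx : x ∈ convexHull ℝ (t : Set E)) :
    ∃ w : stdSimplex ℝ ↥t, phi t w = x := by
  rw [Finset.convexHull_eq] at hx
  obtain ⟨w, hw0, hw1, hwx⟩ := hx
  refine ⟨⟨fun i => w i, fun i => hw0 i i.2, by rw [Finset.sum_coe_sort t w]; exact hw1⟩, ?_⟩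
  rw [Finset.centerMass_eq_of_sum_1 _ _ hw1] at hwx
  rw [← hwx]
  simp only [phi]
  rw [Finset.sum_coe_sort t (fun v => w v • v)]
  rfl

lemma phi_inj (t : Finset E) (ht : AffineIndependent ℝ ((↑) : t → E)) :
    Function.Injective (phi t) := by
  classical
  intro w₁ w₂ h
  ext i
  set u₁ : E → ℝ := fun v => if h : v ∈ t then w₁.1 ⟨v, h⟩ else 0 with hu₁
  set u₂ : E → ℝ := fun v => if h : v ∈ t then w₂.1 ⟨v, h⟩ else 0 with hu₂
  have hs₁ : ∑ v ∈ t, u₁ v = 1 := by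
    rw [← Finset.sum_coe_sort t u₁]
    rw [← w₁.2.2]; apply Finset.sum_congr rfl; intro i _; simp [hu₁]
  have hs₂ : ∑ v ∈ t, u₂ v = 1 := by
    rw [← Finset.sum_coe_sort t u₂]
    rw [← w₂.2.2]; apply Finset.sum_congr rfl; intro i _; simp [hu₂]
  have he : ∑ v ∈ t, u₁ v • v = ∑ v ∈ t, u₂ v • v := by
    rw [← Finset.sum_coe_sort t (fun v => u₁ v • v),
        ← Finset.sum_coe_sort t (fun v => u₂ v • v)]
    have e1 : ∑ i : ↥t, u₁ i • (i : E) = phi t w₁ := by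
      apply Finset.sum_congr rfl; intro i _; simp [hu₁, phi]
    have e2 : ∑ i : ↥t, u₂ i • (i : E) = phi t w₂ := by
      apply Finset.sum_congr rfl; intro i _; simp [hu₂, phi]
    rw [e1, e2, h]
  have := weights_unique ht hs₁ hs₂ he i i.2
  simp [hu₁, hu₂] at this
  exact this

/-- Homeomorphism between the standard simplex and the convex hull of an affinely
independent finset. -/
def phiHomeo (t : Finset E) (ht : AffineIndependent ℝ ((↑) : t → E)) :
    (stdSimplex ℝ ↥t) ≃ₜ (convexHull ℝ (t : Set E) : Set E) :=
  Continuous.homeoOfEquivCompactToT2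
    (f := Equiv.ofBijective (fun w => (⟨phi t w, phi_mem t w⟩ :
        (convexHull ℝ (t : Set E) : Set E)))
      ⟨fun a b h => phi_inj t ht (congrArg Subtype.val h),
       fun x => by obtain ⟨w, hw⟩ := phi_surj t x.2; exact ⟨w, Subtype.ext hw⟩⟩)
    (by exact Continuous.subtype_mk (phi_continuous t) _)

variable [DecidableEq E]

/-- Barycentric coordinates as a function on the ambient space. -/
def coordE (t : Finset E) (ht : AffineIndependent ℝ ((↑) : t → E))
    (x : (convexHull ℝ (t : Set E) : Set E)) : E → ℝ :=
  fun v => if h : v ∈ t then ((phiHomeo t ht).symm x).1 ⟨v, h⟩ else 0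

lemma coordE_nonneg (t : Finset E) (ht : AffineIndependent ℝ ((↑) : t → E))
    (x : (convexHull ℝ (t : Set E) : Set E)) (v : E) : 0 ≤ coordE t ht x v := by
  unfold coordE
  split
  · exact ((phiHomeo t ht).symm x).2.1 _
  · exact le_refl 0

lemma coordE_eq_zero (t : Finset E) (ht : AffineIndependent ℝ ((↑) : t → E))
    (x : (convexHull ℝ (t : Set E) : Set E)) {v : E} (hv : v ∉ t) :
    coordE t ht x v = 0 := dif_neg hv

lemma coordE_sum (t : Finset E) (ht : AffineIndependent ℝ ((↑) : t → E))
    (x : (convexHull ℝ (t : Set E) : Set E)) : ∑ v ∈ t, coordE t ht x v = 1 := by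
  rw [← Finset.sum_coe_sort t (coordE t ht x)]
  rw [← ((phiHomeo t ht).symm x).2.2]
  apply Finset.sum_congr rfl
  intro i _
  simp [coordE]

lemma coordE_smul_sum (t : Finset E) (ht : AffineIndependent ℝ ((↑) : t → E))
    (x : (convexHull ℝ (t : Set E) : Set E)) :
    ∑ v ∈ t, coordE t ht x v • v = (x : E) := by
  rw [← Finset.sum_coe_sort t (fun v => coordE t ht x v • v)]
  have : ∑ i : ↥t, coordE t ht x (i : E) • (i : E) = phi t ((phiHomeo t ht).symm x) := by
    apply Finset.sum_congr rfl
    intro i _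
    simp [coordE, phi]
  rw [this]
  have := (phiHomeo t ht).apply_symm_apply x
  exact congrArg Subtype.val this

lemma coordE_unique (t : Finset E) (ht : AffineIndependent ℝ ((↑) : t → E))
    (x : (convexHull ℝ (t : Set E) : Set E)) {w : E → ℝ}
    (h1 : ∑ v ∈ t, w v = 1) (h2 : ∑ v ∈ t, w v • v = (x : E)) :
    ∀ v ∈ t, w v = coordE t ht x v := by
  exact weights_unique ht h1 (coordE_sum t ht x)
    (by rw [h2, coordE_smul_sum t ht x])

lemma coordE_continuous (t : Finset E) (ht : AffineIndependent ℝ ((↑) : t → E)) (v : E) :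
    Continuous (fun x => coordE t ht x v) := by
  by_cases h : v ∈ t
  · simp only [coordE, dif_pos h]
    exact (continuous_apply _).comp ((continuous_subtype_val).comp
      (phiHomeo t ht).symm.continuous)
  · simp only [coordE, dif_neg h]
    exact continuous_const
/-- Truncated weights. -/
def wfun (t : Finset E) (ht : AffineIndependent ℝ ((↑) : t → E)) (θ : ℝ)
    (x : (convexHull ℝ (t : Set E) : Set E)) : E → ℝ :=
  fun v => max (coordE t ht x v - θ) 0

/-- The local retraction on one simplex. -/
def rho (t : Finset E) (ht : AffineIndependent ℝ ((↑) : t → E)) (θ : ℝ)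
    (x : (convexHull ℝ (t : Set E) : Set E)) : E :=
  t.centerMass (wfun t ht θ x) id

variable {t : Finset E} {ht : AffineIndependent ℝ ((↑) : t → E)} {θ : ℝ}

lemma wfun_nonneg (x : (convexHull ℝ (t : Set E) : Set E)) (v : E) :
    0 ≤ wfun t ht θ x v := le_max_right _ _

lemma wfun_eq_zero_of_coord_lt {x : (convexHull ℝ (t : Set E) : Set E)} {v : E}
    (h : coordE t ht x v < θ) : wfun t ht θ x v = 0 :=
  max_eq_right (by linarith)

lemma wfun_eq_zero_of_not_mem (hθ0 : 0 < θ) {x : (convexHull ℝ (t : Set E) : Set E)}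
    {v : E} (hv : v ∉ t) : wfun t ht θ x v = 0 :=
  wfun_eq_zero_of_coord_lt (by rw [coordE_eq_zero t ht x hv]; exact hθ0)

lemma exists_large_coord (hne : t.Nonempty) (x : (convexHull ℝ (t : Set E) : Set E)) :
    ∃ v ∈ t, ((t.card : ℝ))⁻¹ ≤ coordE t ht x v := by
  by_contra hcon
  push_neg at hcon
  have hcard : (0 : ℝ) < t.card := by
    exact_mod_cast Finset.card_pos.2 hne
  have h1 : (1 : ℝ) < 1 := by
    calc (1 : ℝ) = ∑ v ∈ t, coordE t ht x v := (coordE_sum t ht x).symm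
    _ < ∑ _v ∈ t, ((t.card : ℝ))⁻¹ := Finset.sum_lt_sum_of_nonempty hne (fun v hv => hcon v hv)
    _ = (t.card : ℝ) * ((t.card : ℝ))⁻¹ := by
        rw [Finset.sum_const, nsmul_eq_mul]
    _ = 1 := mul_inv_cancel₀ (ne_of_gt hcard)
  exact absurd h1 (lt_irrefl 1)

lemma wsum_pos (hne : t.Nonempty) (hθ1 : θ < ((t.card : ℝ))⁻¹)
    (x : (convexHull ℝ (t : Set E) : Set E)) : 0 < ∑ v ∈ t, wfun t ht θ x v := by
  obtain ⟨v, hv, hge⟩ := exists_large_coord hne x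
  have h1 : ((t.card : ℝ))⁻¹ - θ ≤ wfun t ht θ x v :=
    le_trans (by linarith) (le_max_left _ _)
  have h2 : wfun t ht θ x v ≤ ∑ v ∈ t, wfun t ht θ x v :=
    Finset.single_le_sum (fun i _ => wfun_nonneg x i) hv
  linarith

lemma filter_wfun_nonempty (hne : t.Nonempty) (hθ1 : θ < ((t.card : ℝ))⁻¹)
    (x : (convexHull ℝ (t : Set E) : Set E)) :
    (t.filter fun v => wfun t ht θ x v ≠ 0).Nonempty := by
  rw [Finset.filter_nonempty_iff]
  by_contra hcon
  push_neg at hcon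
  have hz : ∑ v ∈ t, wfun t ht θ x v = 0 :=
    Finset.sum_eq_zero (fun v hv => hcon v hv)
  exact (wsum_pos (ht := ht) hne hθ1 x).ne' hz

lemma rho_mem_filter (hne : t.Nonempty) (hθ1 : θ < ((t.card : ℝ))⁻¹)
    (x : (convexHull ℝ (t : Set E) : Set E)) :
    rho t ht θ x ∈ convexHull ℝ ((t.filter fun v => wfun t ht θ x v ≠ 0 : Finset E) : Set E) := by
  have hsum : 0 < ∑ v ∈ t.filter (fun v => wfun t ht θ x v ≠ 0), wfun t ht θ x v := by
    rw [Finset.sum_filter_ne_zero]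
    exact wsum_pos hne hθ1 x
  have heq : (t.filter fun v => wfun t ht θ x v ≠ 0).centerMass (wfun t ht θ x) id
      = t.centerMass (wfun t ht θ x) id :=
    Finset.centerMass_subset (w := wfun t ht θ x) id (Finset.filter_subset _ _)
      (fun i hit hnf => by
        by_contra h
        exact hnf (Finset.mem_filter.2 ⟨hit, h⟩))
  rw [rho, ← heq]
  exact Finset.centerMass_mem_convexHull _
    (fun v _ => wfun_nonneg (ht := ht) x v) hsum (z := id) (fun v hv => Finset.mem_coe.2 hv)

lemma rho_continuous (hne : t.Nonempty) (hθ1 : θ < ((t.card : ℝ))⁻¹) :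
    Continuous (rho t ht θ) := by
  have hw : ∀ v : E, Continuous (fun x => wfun t ht θ x v) := fun v =>
    ((coordE_continuous t ht v).sub continuous_const).max continuous_const
  have hsum : Continuous (fun x => ∑ v ∈ t, wfun t ht θ x v) :=
    continuous_finset_sum _ (fun v _ => hw v)
  have hnum : Continuous (fun x => ∑ v ∈ t, wfun t ht θ x v • v) :=
    continuous_finset_sum _ (fun v _ => (hw v).smul continuous_const)
  have : Continuous (fun x => (∑ v ∈ t, wfun t ht θ x v)⁻¹ •
      ∑ v ∈ t, wfun t ht θ x v • v) :=
    ((hsum.inv₀ (fun x => ne_of_gt (wsum_pos hne hθ1 x))).smul hnum)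
  convert this using 1
  funext x
  rfl

/-- A center of mass does not change when restricting to a subset supporting the weights. -/
lemma centerMass_subset_eq {u t : Finset E} (h : u ⊆ t) (w : E → ℝ)
    (hw : ∀ v ∈ t, v ∉ u → w v = 0) : t.centerMass w id = u.centerMass w id := by
  simp only [Finset.centerMass]
  rw [Finset.sum_subset h (fun v hv hnv => hw v hv hnv),
    Finset.sum_subset h (fun v hv hnv => by rw [hw v hv hnv, zero_smul])]
open Geometry in
/-- Barycentric coordinates agree across faces of a simplicial complex. -/
lemma coordE_agree (K : SimplicialComplex ℝ E) {s t : Finset E}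
    (hs : s ∈ K.faces) (ht : t ∈ K.faces) {x : E}
    (hxs : x ∈ convexHull ℝ (s : Set E)) (hxt : x ∈ convexHull ℝ (t : Set E)) :
    ∀ v, coordE s (K.indep hs) ⟨x, hxs⟩ v = coordE t (K.indep ht) ⟨x, hxt⟩ v := by
  have hxu : x ∈ convexHull ℝ ((s ∩ t : Finset E) : Set E) := by
    rw [Finset.coe_inter]
    exact K.inter_subset_convexHull hs ht ⟨hxs, hxt⟩
  obtain ⟨w, hw0, hw1, hwx⟩ := Finset.mem_convexHull.1 hxu
  rw [Finset.centerMass_eq_of_sum_1 _ _ hw1] at hwx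
  set w' : E → ℝ := fun v => if v ∈ s ∩ t then w v else 0 with hw'
  have hsub : ∀ r : Finset E, s ∩ t ⊆ r →
      (∑ v ∈ r, w' v = 1 ∧ ∑ v ∈ r, w' v • v = x) := by
    intro r hr
    constructor
    · rw [← Finset.sum_subset hr (fun v _ hnv => by
        simp only [hw']; rw [if_neg hnv]), ← hw1]
      exact Finset.sum_congr rfl (fun v hv => by simp only [hw']; rw [if_pos hv])
    · rw [← Finset.sum_subset hr (fun v _ hnv => by
        simp only [hw']; rw [if_neg hnv, zero_smul]), ← hwx]
      exact Finset.sum_congr rfl (fun v hv => by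
        simp only [hw', id]; rw [if_pos hv])
  have hct : ∀ v ∈ t, w' v = coordE t (K.indep ht) ⟨x, hxt⟩ v :=
    coordE_unique t (K.indep ht) ⟨x, hxt⟩ (hsub t Finset.inter_subset_right).1
      (hsub t Finset.inter_subset_right).2
  have hcs : ∀ v ∈ s, w' v = coordE s (K.indep hs) ⟨x, hxs⟩ v :=
    coordE_unique s (K.indep hs) ⟨x, hxs⟩ (hsub s Finset.inter_subset_left).1
      (hsub s Finset.inter_subset_left).2
  intro v
  by_cases hvs : v ∈ s <;> by_cases hvt : v ∈ t
  · rw [← hcs v hvs, ← hct v hvt]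
  · rw [← hcs v hvs, coordE_eq_zero _ _ _ hvt]
    simp [hw', Finset.mem_inter, hvt]
  · rw [← hct v hvt, coordE_eq_zero _ _ _ hvs]
    simp [hw', Finset.mem_inter, hvs]
  · rw [coordE_eq_zero _ _ _ hvs, coordE_eq_zero _ _ _ hvt]

open Geometry in
/-- The local retractions agree on overlaps. -/
lemma rho_compat (K : SimplicialComplex ℝ E) {s t : Finset E}
    (hs : s ∈ K.faces) (ht : t ∈ K.faces) {θ : ℝ} (hθ0 : 0 < θ) {x : E}
    (hxs : x ∈ convexHull ℝ (s : Set E)) (hxt : x ∈ convexHull ℝ (t : Set E)) :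
    rho s (K.indep hs) θ ⟨x, hxs⟩ = rho t (K.indep ht) θ ⟨x, hxt⟩ := by
  have key := coordE_agree K hs ht hxs hxt
  have wkey : wfun s (K.indep hs) θ ⟨x, hxs⟩ = wfun t (K.indep ht) θ ⟨x, hxt⟩ :=
    funext fun v => by unfold wfun; rw [key v]
  have h1 : rho s (K.indep hs) θ ⟨x, hxs⟩
      = (s ∩ t).centerMass (wfun s (K.indep hs) θ ⟨x, hxs⟩) id := by
    rw [rho]
    apply centerMass_subset_eq Finset.inter_subset_left
    intro v hv hnv
    have hvt : v ∉ t := fun hvt => hnv (Finset.mem_inter.2 ⟨hv, hvt⟩)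
    rw [wkey]
    exact wfun_eq_zero_of_not_mem hθ0 hvt
  have h2 : rho t (K.indep ht) θ ⟨x, hxt⟩
      = (s ∩ t).centerMass (wfun t (K.indep ht) θ ⟨x, hxt⟩) id := by
    rw [rho]
    apply centerMass_subset_eq Finset.inter_subset_right
    intro v hv hnv
    have hvs : v ∉ s := fun hvs => hnv (Finset.mem_inter.2 ⟨hvs, hv⟩)
    rw [← wkey]
    exact wfun_eq_zero_of_not_mem hθ0 hvs
  rw [h1, h2, wkey]

open Geometry in
/-- For each pair of faces there is an `ε` such that points of `t` that are `ε`-close to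
`s` have all coordinates outside `s` below `θ`. -/
lemma pair_eps (K : SimplicialComplex ℝ E) {s t : Finset E}
    (hs : s ∈ K.faces) (ht : t ∈ K.faces) {θ : ℝ} (hθ0 : 0 < θ) :
    ∃ ε > 0, ∀ x (hxt : x ∈ convexHull ℝ (t : Set E)),
      infDist x (convexHull ℝ (s : Set E)) < ε →
      ∀ v ∈ t, v ∉ s → coordE t (K.indep ht) ⟨x, hxt⟩ v < θ := by
  classical
  set A : Set (convexHull ℝ (t : Set E) : Set E) :=
    ⋃ v ∈ ((t \ s : Finset E) : Set E),
      {y : (convexHull ℝ (t : Set E) : Set E) | θ ≤ coordE t (K.indep ht) y v} with hA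
  have hAclosed : IsClosed A :=
    Set.Finite.isClosed_biUnion (t \ s).finite_toSet
      (fun v _ => isClosed_le continuous_const
        ((coordE_continuous t (K.indep ht) v).comp continuous_id))
  set C : Set E := Subtype.val '' A with hC
  haveI : CompactSpace (convexHull ℝ (t : Set E) : Set E) :=
    isCompact_iff_compactSpace.1 (t.finite_toSet.isCompact_convexHull (𝕜 := ℝ))
  have hCcomp : IsCompact C := (hAclosed.isCompact).image continuous_subtype_val
  -- membership characterization
  have hmemC : ∀ x (hxt : x ∈ convexHull ℝ (t : Set E)),
      (∃ v ∈ t, v ∉ s ∧ θ ≤ coordE t (K.indep ht) ⟨x, hxt⟩ v) → x ∈ C := by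
    intro x hxt ⟨v, hvt, hvs, hθv⟩
    exact ⟨⟨x, hxt⟩, Set.mem_biUnion (by simp [Finset.mem_sdiff, hvt, hvs]) hθv, rfl⟩
  by_cases hCne : C.Nonempty
  · obtain ⟨z, hzC, hzmin⟩ := hCcomp.exists_isMinOn hCne
      (continuous_infDist_pt (convexHull ℝ (s : Set E))).continuousOn
    refine ⟨infDist z (convexHull ℝ (s : Set E)), ?_, ?_⟩
    · -- positivity
      rcases (infDist_nonneg (x := z) (s := convexHull ℝ (s : Set E))).lt_or_eq with h | h
      · exact h
      · exfalso
        have hsne : (convexHull ℝ (s : Set E)).Nonempty := by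
          obtain ⟨v, hv⟩ := Finset.nonempty_iff_ne_empty.2
            (fun h0 => K.empty_notMem (h0 ▸ hs))
          exact ⟨v, subset_convexHull ℝ _ (Finset.mem_coe.2 hv)⟩
        have hzs : z ∈ convexHull ℝ (s : Set E) :=
          ((s.finite_toSet.isCompact_convexHull (𝕜 := ℝ)).isClosed.mem_iff_infDist_zero hsne).2 h.symm
        obtain ⟨y, hyA, rfl⟩ := hzC
        obtain ⟨v, hvm, hθv⟩ := Set.mem_iUnion₂.1 hyA
        have hvts : (v : E) ∈ t \ s := Finset.mem_coe.1 hvm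
        rw [Finset.mem_sdiff] at hvts
        have hagree := coordE_agree K hs ht hzs y.2 v
        have : coordE t (K.indep ht) y v = 0 := by
          have h0 : coordE s (K.indep hs) ⟨(y : E), hzs⟩ v = 0 :=
            coordE_eq_zero _ _ _ hvts.2
          rw [← hagree]
          exact h0
        rw [Set.mem_setOf_eq] at hθv
        have : θ ≤ (0 : ℝ) := by
          rw [← this]
          convert hθv using 2
        linarith
    · intro x hxt hdist v hvt hvs
      by_contra hge
      push_neg at hge
      have hxC : x ∈ C := hmemC x hxt ⟨v, hvt, hvs, hge⟩
      have := hzmin hxC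
      simp only [Set.mem_setOf_eq] at this
      exact absurd (lt_of_le_of_lt this hdist) (lt_irrefl _)
  · refine ⟨1, one_pos, ?_⟩
    intro x hxt _ v hvt hvs
    by_contra hge
    push_neg at hge
    exact hCne ⟨x, ⟨⟨x, hxt⟩, Set.mem_biUnion (by simp [Finset.mem_sdiff, hvt, hvs]) hge, rfl⟩⟩
end SPR
end

open Metric SPR in
/-- On a finite simplicial complex there are, for every `δ > 0`, an
`0 < ε < δ` and a simplex-preserving self-map `r` of the polyhedron moving each point
`ε`-close to a simplex into that simplex. -/
theorem simplex_preserving_retraction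
    (E : Type) [NormedAddCommGroup E] [NormedSpace ℝ E]
    (K : Geometry.SimplicialComplex ℝ E) (hfin : K.faces.Finite)
    (δ : ℝ) (hδ : 0 < δ) :
    ∃ ε : ℝ, 0 < ε ∧ ε < δ ∧
      ∃ r : C(↥K.space, ↥K.space),
        (∀ s ∈ K.faces, ∀ x : ↥K.space,
          (x : E) ∈ convexHull ℝ (s : Set E) → (r x : E) ∈ convexHull ℝ (s : Set E)) ∧
        (∀ s ∈ K.faces, ∀ x : ↥K.space,
          Metric.infDist (x : E) (convexHull ℝ (s : Set E)) < ε →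
            (r x : E) ∈ convexHull ℝ (s : Set E)) := by
  classical
  by_cases hempty : K.faces = ∅
  · refine ⟨δ / 2, by linarith, by linarith, ContinuousMap.id _, ?_, ?_⟩ <;>
      · intro s hsK
        rw [hempty] at hsK
        exact absurd hsK (Set.notMem_empty s)
  · obtain ⟨t₀, ht₀⟩ := Set.nonempty_iff_ne_empty.2 hempty
    have hne : ∀ t ∈ K.faces, t.Nonempty := fun t htK =>
      Finset.nonempty_iff_ne_empty.2 (fun h0 => K.empty_notMem (h0 ▸ htK))
    set N : ℕ := hfin.toFinset.sup Finset.card with hN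
    set θ : ℝ := ((N : ℝ) + 1)⁻¹ with hθ
    have hθ0 : 0 < θ := by positivity
    have hθcard : ∀ t ∈ K.faces, θ < ((t.card : ℝ))⁻¹ := by
      intro t htK
      have h1 : 0 < (t.card : ℝ) := by exact_mod_cast Finset.card_pos.2 (hne t htK)
      have h2 : (t.card : ℝ) ≤ (N : ℝ) := by
        exact_mod_cast Finset.le_sup (f := Finset.card) (hfin.mem_toFinset.2 htK)
      rw [hθ]
      apply inv_strictAnti₀ h1
      linarith
    -- the global map
    have hface : ∀ x, x ∈ K.space → ∃ s, s ∈ K.faces ∧ x ∈ convexHull ℝ (s : Set E) :=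
      fun x h => Geometry.SimplicialComplex.mem_space_iff.1 h
    choose fc hfc1 hfc2 using hface
    set F : E → E := fun x =>
      if h : x ∈ K.space then rho (fc x h) (K.indep (hfc1 x h)) θ ⟨x, hfc2 x h⟩ else x
      with hF
    have hFeq : ∀ t (htK : t ∈ K.faces) x (hxt : x ∈ convexHull ℝ (t : Set E)),
        F x = rho t (K.indep htK) θ ⟨x, hxt⟩ := by
      intro t htK x hxt
      have hxsp : x ∈ K.space := Geometry.SimplicialComplex.convexHull_subset_space htK hxt
      simp only [hF]
      rw [dif_pos hxsp]
      exact rho_compat K (hfc1 x hxsp) htK hθ0 (hfc2 x hxsp) hxt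
    have hFfilter : ∀ t (htK : t ∈ K.faces) x (hxt : x ∈ convexHull ℝ (t : Set E)),
        F x ∈ convexHull ℝ
          ((t.filter fun v => wfun t (K.indep htK) θ ⟨x, hxt⟩ v ≠ 0 : Finset E) : Set E) := by
      intro t htK x hxt
      rw [hFeq t htK x hxt]
      exact rho_mem_filter (hne t htK) (hθcard t htK) ⟨x, hxt⟩
    have hFspace : ∀ x, x ∈ K.space → F x ∈ K.space := by
      intro x hx
      have htK := hfc1 x hx
      have hxt := hfc2 x hx
      have hu : (fc x hx).filter
          (fun v => wfun (fc x hx) (K.indep htK) θ ⟨x, hxt⟩ v ≠ 0) ∈ K.faces :=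
        K.down_closed htK (Finset.filter_subset _ _)
          (filter_wfun_nonempty (hne _ htK) (hθcard _ htK) ⟨x, hxt⟩)
      exact Geometry.SimplicialComplex.convexHull_subset_space hu (hFfilter _ htK x hxt)
    set r : ↥K.space → ↥K.space := fun x => ⟨F x.1, hFspace x.1 x.2⟩ with hr
    have hrcont : Continuous r := by
      apply Continuous.subtype_mk
      apply (locallyFinite_of_finite (ι := ↥hfin.toFinset)
        (fun i => (Subtype.val ⁻¹' (convexHull ℝ (((i : Finset E)) : Set E))
          : Set ↥K.space))).continuous
      · apply Set.eq_univ_of_forall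
        intro x
        obtain ⟨t, htK, hxt⟩ := Geometry.SimplicialComplex.mem_space_iff.1 x.2
        exact Set.mem_iUnion.2 ⟨⟨t, hfin.mem_toFinset.2 htK⟩, hxt⟩
      · intro i
        exact ((i : Finset E).finite_toSet.isCompact_convexHull (𝕜 := ℝ)).isClosed.preimage
          continuous_subtype_val
      · intro i
        rw [continuousOn_iff_continuous_restrict]
        have htK : (i : Finset E) ∈ K.faces := hfin.mem_toFinset.1 i.2
        have heq : (Subtype.val ⁻¹' (convexHull ℝ (((i : Finset E)) : Set E))
              : Set ↥K.space).domRestrict (fun x : ↥K.space => F x.1)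
            = (rho (i : Finset E) (K.indep htK) θ) ∘
              (fun y => (⟨(y.1 : E), y.2⟩ : (convexHull ℝ (((i : Finset E)) : Set E) : Set E))) :=
          funext fun y => hFeq _ htK _ y.2
        rw [heq]
        exact (rho_continuous (hne _ htK) (hθcard _ htK)).comp
          (Continuous.subtype_mk (continuous_subtype_val.comp continuous_subtype_val) _)
    -- choice of ε
    have hpair := fun s (hs : s ∈ K.faces) t (ht : t ∈ K.faces) => pair_eps K hs ht hθ0
    choose εf hεf1 hεf2 using hpair
    have hPne : ((hfin.toFinset ×ˢ hfin.toFinset).attach).Nonempty := by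
      rw [Finset.attach_nonempty_iff, Finset.nonempty_product]
      exact ⟨⟨t₀, hfin.mem_toFinset.2 ht₀⟩, ⟨t₀, hfin.mem_toFinset.2 ht₀⟩⟩
    set εinf : ℝ := ((hfin.toFinset ×ˢ hfin.toFinset).attach).inf' hPne
      (fun p => εf p.1.1 (hfin.mem_toFinset.1 (Finset.mem_product.1 p.2).1)
        p.1.2 (hfin.mem_toFinset.1 (Finset.mem_product.1 p.2).2)) with hεinf
    set ε : ℝ := min (δ / 2) εinf with hε
    have hεpos : 0 < ε := by
      apply lt_min (by linarith)
      rw [hεinf, Finset.lt_inf'_iff]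
      intro p _
      exact hεf1 _ _ _ _
    have hεle : ∀ s (hs : s ∈ K.faces) t (ht : t ∈ K.faces), ε ≤ εf s hs t ht := by
      intro s hs t ht
      have hmem : ((s, t) : Finset E × Finset E) ∈ hfin.toFinset ×ˢ hfin.toFinset :=
        Finset.mem_product.2 ⟨hfin.mem_toFinset.2 hs, hfin.mem_toFinset.2 ht⟩
      calc ε ≤ εinf := min_le_right _ _
      _ ≤ _ := Finset.inf'_le _ (Finset.mem_attach _ ⟨(s, t), hmem⟩)
    refine ⟨ε, hεpos, lt_of_le_of_lt (min_le_left _ _) (by linarith), ⟨r, hrcont⟩, ?_, ?_⟩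
    · intro s hsK x hxs
      show F (x : E) ∈ convexHull ℝ (s : Set E)
      rw [hFeq s hsK x.1 hxs]
      exact convexHull_mono (Finset.coe_subset.2 (Finset.filter_subset _ _))
        (rho_mem_filter (hne s hsK) (hθcard s hsK) ⟨x.1, hxs⟩)
    · intro s hsK x hdist
      obtain ⟨t, htK, hxt⟩ := Geometry.SimplicialComplex.mem_space_iff.1 x.2
      have hcoord : ∀ v ∈ t, v ∉ s → coordE t (K.indep htK) ⟨x.1, hxt⟩ v < θ :=
        hεf2 s hsK t htK x.1 hxt (lt_of_lt_of_le hdist (hεle s hsK t htK))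
      have hsubset : (t.filter fun v => wfun t (K.indep htK) θ ⟨x.1, hxt⟩ v ≠ 0) ⊆ s := by
        intro v hv
        rw [Finset.mem_filter] at hv
        by_contra hvs
        exact hv.2 (wfun_eq_zero_of_coord_lt (hcoord v hv.1 hvs))
      show F (x : E) ∈ convexHull ℝ (s : Set E)
      exact convexHull_mono (Finset.coe_subset.2 hsubset) (hFfilter t htK x.1 hxt)
end

section
/- Let X be a compact metrizable space and n ≥ 0. Then S^n is an absolute extensor for X (i.e., every map from a closed subset of X to S^n extends over X) if and only if the covering dimension of X is at most n. -/
noncomputable section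

open scoped Topology

/-- A `G`-valued function on `m`-tuples is locally zero if it vanishes on all tuples
contained in a single member of some open cover. -/
def LocallyZero {m : ℕ} {X G : Type} [TopologicalSpace X] [Zero G]
    (f : (Fin m → X) → G) : Prop :=
  ∃ U : Set (Set X), (∀ u ∈ U, IsOpen u) ∧ ⋃₀ U = Set.univ ∧
    ∀ t : Fin m → X, (∃ u ∈ U, ∀ i, t i ∈ u) → f t = 0

/-- The Alexander–Spanier coboundary operator. -/
def ASd {k : ℕ} {X G : Type} [AddCommGroup G] (ψ : (Fin k → X) → G) :
    (Fin (k + 1) → X) → G :=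
  fun t => ∑ i : Fin (k + 1), (-1 : ℤ) ^ (i : ℕ) • ψ (t ∘ i.succAbove)

/-- Vanishing of the degree-`k` Čech (Alexander–Spanier) cohomology of `X` with
coefficients in `G`. -/
def CechCohZero (k : ℕ) (X : Type) [TopologicalSpace X] (G : Type) [AddCommGroup G] : Prop :=
  ∀ φ : (Fin (k + 1) → X) → G, LocallyZero (ASd φ) →
    ∃ ψ : (Fin k → X) → G, LocallyZero (fun t => φ t - ASd ψ t)

/-- A compact metrizable continuum is `G`-acyclic if its Čech cohomology with coefficients
in `G` vanishes in every positive degree. -/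
def IsGAcyclic (G : Type) [AddCommGroup G] (Z : Type) [TopologicalSpace Z] : Prop :=
  ∀ k : ℕ, CechCohZero (k + 1) Z G

/-- Cohomological dimension `dim_G X ≤ n`, via surjectivity of the restriction
`Ȟⁿ(X;G) → Ȟⁿ(A;G)` for every closed `A ⊆ X`. -/
def CohDimLE (G : Type) [AddCommGroup G] (X : Type) [TopologicalSpace X] (n : ℕ) : Prop :=
  ∀ A : Set X, IsClosed A →
    ∀ φ : (Fin (n + 1) → ↥A) → G, LocallyZero (ASd φ) →
      ∃ Φ : (Fin (n + 1) → X) → G, LocallyZero (ASd Φ) ∧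
        ∃ ψ : (Fin n → ↥A) → G,
          LocallyZero (fun t => φ t - Φ (fun i => (t i : X)) - ASd ψ t)

/-- `K` is an absolute extensor for `X` (`X τ K`). -/
def IsAbsExtensor (X : Type) [TopologicalSpace X] (K : Type) [TopologicalSpace K] : Prop :=
  ∀ A : Set X, IsClosed A → ∀ f : C(↥A, K),
    ∃ g : C(X, K), ∀ a : ↥A, g ↑a = f a

/-- `P` is an absolute neighborhood extensor for metrizable spaces. -/
def IsANE (P : Type) [TopologicalSpace P] : Prop :=
  ∀ (X : Type) [TopologicalSpace X] [TopologicalSpace.MetrizableSpace X],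
    ∀ A : Set X, IsClosed A → ∀ f : C(↥A, P),
      ∃ U : Set X, IsOpen U ∧ ∃ hAU : A ⊆ U, ∃ g : C(↥U, P),
        ∀ (a : X) (ha : a ∈ A), g ⟨a, hAU ha⟩ = f ⟨a, ha⟩

/-- An ANR: a metrizable absolute neighborhood extensor for metrizable spaces. -/
def IsANR (P : Type) [TopologicalSpace P] : Prop :=
  TopologicalSpace.MetrizableSpace P ∧ IsANE P

/-- A compactum has trivial shape (is cell-like) iff it is nonempty and every map
into an ANR is null-homotopic. -/
def TrivialShape (Z : Type) [TopologicalSpace Z] : Prop :=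
  Nonempty Z ∧ ∀ (P : Type) [TopologicalSpace P], IsANR P →
    ∀ f : C(Z, P), ∃ p : P, f.Homotopic (ContinuousMap.const Z p)

/-- Covering dimension at most `n`: every finite open cover has a finite open refinement
of order at most `n + 1`. -/
def CovDimLE (X : Type) [TopologicalSpace X] (n : ℕ) : Prop :=
  ∀ U : Set (Set X), U.Finite → (∀ u ∈ U, IsOpen u) → ⋃₀ U = Set.univ →
    ∃ V : Set (Set X), V.Finite ∧ (∀ v ∈ V, IsOpen v) ∧ ⋃₀ V = Set.univ ∧
      (∀ v ∈ V, ∃ u ∈ U, v ⊆ u) ∧ ∀ x : X, {v ∈ V | x ∈ v}.ncard ≤ n + 1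

/-- Composite bonding maps of an inverse sequence: `bond p i l : D (i+l) → D i`. -/
def bond {D : ℕ → Type} [∀ i, TopologicalSpace (D i)]
    (p : ∀ i, C(D (i + 1), D i)) (i : ℕ) : ∀ l : ℕ, C(D (i + l), D i)
  | 0 => ContinuousMap.id _
  | (l + 1) => (bond p i l).comp (p (i + l))

/-- The inverse limit of an inverse sequence of spaces. -/
def seqLimit {D : ℕ → Type} [∀ i, TopologicalSpace (D i)]
    (p : ∀ i, C(D (i + 1), D i)) : Type :=
  { x : (i : ℕ) → D i // ∀ i, p i (x (i + 1)) = x i }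

instance {D : ℕ → Type} [∀ i, TopologicalSpace (D i)] (p : ∀ i, C(D (i + 1), D i)) :
    TopologicalSpace (seqLimit p) := by unfold seqLimit; infer_instance

/-- `X` is a compact polyhedron: homeomorphic to the underlying space of a finite
geometric simplicial complex. -/
def IsCompactPolyhedron (X : Type) [TopologicalSpace X] : Prop :=
  ∃ (N : ℕ) (K : Geometry.SimplicialComplex ℝ (EuclideanSpace ℝ (Fin N))),
    K.faces.Finite ∧ Nonempty (X ≃ₜ ↥K.space)

/-- The `n`-sphere (as in the December 2024 Mathlib `RelativeCWComplex.sphere`). -/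
def RelativeCWComplex.sphere.{u} (n : ℤ) : TopCat.{u} :=
  TopCat.of <| ULift <| Metric.sphere (0 : EuclideanSpace ℝ <| Fin <| (n + 1).toNat) 1

/-- The `n`-disk (as in the December 2024 Mathlib `RelativeCWComplex.disk`). -/
def RelativeCWComplex.disk.{u} (n : ℤ) : TopCat.{u} :=
  TopCat.of <| ULift <| Metric.closedBall (0 : EuclideanSpace ℝ <| Fin <| n.toNat) 1

/-- The inclusion of the `n`-sphere into the `(n + 1)`-disk. -/
def RelativeCWComplex.sphereInclusion.{u} (n : ℤ) :
    RelativeCWComplex.sphere.{u} n ⟶ RelativeCWComplex.disk.{u} (n + 1) :=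
  TopCat.ofHom
    { toFun := fun ⟨p, hp⟩ ↦ ⟨p, le_of_eq hp⟩
      continuous_toFun := ⟨fun t ⟨s, ⟨r, hro, hrs⟩, hst⟩ ↦ by
        rw [isOpen_induced_iff, ← hst, ← hrs]
        tauto⟩ }

/-- Attaching generalized cells (December 2024 Mathlib). -/
structure RelativeCWComplex.AttachGeneralizedCells.{u} {S D : TopCat.{u}} (f : S ⟶ D)
    (X X' : TopCat.{u}) where
  cells : Type u
  attachMaps : cells → (S ⟶ X)
  iso_pushout : X' ≅ CategoryTheory.Limits.pushout (CategoryTheory.Limits.Sigma.desc attachMaps)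
    (CategoryTheory.Limits.Sigma.map fun _ ↦ f)

/-- Attaching `(n + 1)`-cells (December 2024 Mathlib). -/
abbrev RelativeCWComplex.AttachCells.{u} (n : ℤ) :=
  RelativeCWComplex.AttachGeneralizedCells (RelativeCWComplex.sphereInclusion.{u} n)

/-- Relative CW-complex (December 2024 Mathlib). -/
structure RelativeCWComplex.{u} (A : TopCat.{u}) where
  sk : ℕ → TopCat.{u}
  sk_zero : sk 0 = A
  attachCells (n : ℕ) : RelativeCWComplex.AttachCells ((n : ℤ) - 1) (sk n) (sk (n + 1))

/-- CW-complex (December 2024 Mathlib `CWComplex`). -/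
abbrev OldCWComplex.{u} := RelativeCWComplex.{u} (TopCat.of PEmpty)

/-- The inclusion `sk n ⟶ sk (n + 1)`. -/
def RelativeCWComplex.inclusion.{u} {A : TopCat.{u}} (X : RelativeCWComplex.{u} A) (n : ℕ) :
    X.sk n ⟶ X.sk (n + 1) :=
  CategoryTheory.CategoryStruct.comp (CategoryTheory.Limits.pushout.inl _ _)
    (X.attachCells n).iso_pushout.inv

/-- The sequence of skeleta. -/
def RelativeCWComplex.sequence.{u} {A : TopCat.{u}} (X : RelativeCWComplex.{u} A) :
    CategoryTheory.Functor ℕ TopCat.{u} :=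
  CategoryTheory.Functor.ofSequence X.inclusion

/-- The topological space underlying a relative CW-complex. -/
def RelativeCWComplex.toTopCat.{u} {A : TopCat.{u}} (X : RelativeCWComplex.{u} A) : TopCat.{u} :=
  CategoryTheory.Limits.colimit X.sequence

/-- `X` carries the structure of a CW-complex. -/
def IsCWComplex (X : Type) [TopologicalSpace X] : Prop :=
  ∃ C : OldCWComplex.{0}, Nonempty (X ≃ₜ ↥C.toTopCat)

/-- `X` carries the structure of a finite CW-complex. -/
def IsFiniteCWComplex (X : Type) [TopologicalSpace X] : Prop :=
  ∃ C : OldCWComplex.{0}, (∀ n, Finite (C.attachCells n).cells) ∧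
    (∃ N : ℕ, ∀ n, N ≤ n → IsEmpty (C.attachCells n).cells) ∧
    Nonempty (X ≃ₜ ↥C.toTopCat)

end


noncomputable section

/-- The unit `n`-sphere in `ℝⁿ⁺¹`. -/
def nSphere (n : ℕ) : Set (EuclideanSpace ℝ (Fin (n + 1))) := Metric.sphere 0 1

/-- The unit `(n+1)`-ball in `ℝⁿ⁺¹`. -/
def nBall (n : ℕ) : Set (EuclideanSpace ℝ (Fin (n + 1))) := Metric.closedBall 0 1

end



noncomputable section AEaux

open Set Topology

abbrev Euc (m : ℕ) : Type := EuclideanSpace ℝ (Fin m)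

/-- Every continuous map to `ℝ^{m+1}` is uniformly approximable by nonvanishing maps. -/
def NiceP (X : Type) [TopologicalSpace X] (m : ℕ) : Prop :=
  ∀ F : C(X, Euc (m+1)), ∀ ε : ℝ, 0 < ε →
    ∃ F' : C(X, Euc (m+1)), (∀ x, F' x ≠ 0) ∧ ∀ x, ‖F' x - F x‖ < ε

section helpers
variable {α : Type} [TopologicalSpace α] {m : ℕ}

lemma continuous_toEuc {g : α → Fin m → ℝ} (h : ∀ i, Continuous fun a => g a i) :
    Continuous (fun a => (WithLp.toLp 2 (g a) : Euc m)) :=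
  (PiLp.continuous_toLp 2 _).comp (continuous_pi h)

lemma continuous_eucApply (i : Fin m) : Continuous (fun y : Euc m => y i) :=
  PiLp.continuous_apply 2 _ i

end helpers

lemma mem_nSphere_iff {m : ℕ} {v : Euc (m+1)} : v ∈ nSphere m ↔ ‖v‖ = 1 := by
  simp [nSphere, mem_sphere_zero_iff_norm]

lemma niceP_of_absExtensor {X : Type} [TopologicalSpace X] {m : ℕ}
    (h : IsAbsExtensor X (↥(nSphere m))) : NiceP X m := by
  intro F ε hε
  set η := ε/3 with hηdef
  have hη0 : 0 < η := by positivity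
  set A : Set X := {x | η ≤ ‖F x‖} with hA
  have hAc : IsClosed A := isClosed_le continuous_const F.continuous.norm
  have hmem : ∀ a : ↥A, (‖F ↑a‖⁻¹ • F ↑a : Euc (m+1)) ∈ nSphere m := by
    intro a
    have ha : η ≤ ‖F ↑a‖ := a.2
    have hne : ‖F (↑a : X)‖ ≠ 0 := ne_of_gt (lt_of_lt_of_le hη0 ha)
    rw [mem_nSphere_iff, norm_smul, norm_inv, norm_norm, inv_mul_cancel₀ hne]
  have hcont : Continuous (fun a : ↥A => (⟨‖F ↑a‖⁻¹ • F ↑a, hmem a⟩ : ↥(nSphere m))) := by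
    refine Continuous.subtype_mk ?_ _
    have hFc : Continuous fun a : ↥A => F ↑a := F.continuous.comp continuous_subtype_val
    exact (hFc.norm.inv₀ (fun a => ne_of_gt (lt_of_lt_of_le hη0 a.2))).smul hFc
  obtain ⟨g, hg⟩ := h A hAc ⟨_, hcont⟩
  have hg1 : ∀ x, ‖(g x : Euc (m+1))‖ = 1 := fun x => mem_nSphere_iff.1 (g x).2
  refine ⟨⟨fun x => max ‖F x‖ η • (g x : Euc (m+1)), ?_⟩, ?_, ?_⟩
  · exact (F.continuous.norm.max continuous_const).smul
      (continuous_subtype_val.comp g.continuous)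
  · intro x hzero
    simp only [ContinuousMap.coe_mk] at hzero
    have : ‖max ‖F x‖ η • (g x : Euc (m+1))‖ = max ‖F x‖ η := by
      rw [norm_smul, hg1, mul_one, Real.norm_eq_abs, abs_of_pos (lt_max_of_lt_right hη0)]
    rw [hzero, norm_zero] at this
    exact ne_of_gt (lt_max_of_lt_right hη0) this.symm
  · intro x
    simp only [ContinuousMap.coe_mk]
    rcases le_or_gt η ‖F x‖ with hx | hx
    · have hxA : x ∈ A := hx
      have := hg ⟨x, hxA⟩
      rw [this]
      have hne : ‖F x‖ ≠ 0 := ne_of_gt (lt_of_lt_of_le hη0 hx)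
      simp only [ContinuousMap.coe_mk]
      rw [max_eq_left hx, smul_smul, mul_inv_cancel₀ hne, one_smul, sub_self, norm_zero]
      exact hε
    · have h1 : ‖max ‖F x‖ η • (g x : Euc (m+1))‖ = η := by
        rw [norm_smul, hg1, mul_one, Real.norm_eq_abs, abs_of_pos (lt_max_of_lt_right hη0),
          max_eq_right hx.le]
      calc ‖max ‖F x‖ η • (g x : Euc (m+1)) - F x‖
          ≤ ‖max ‖F x‖ η • (g x : Euc (m+1))‖ + ‖F x‖ := norm_sub_le _ _
        _ < η + η := by rw [h1]; exact add_lt_add_right hx _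
        _ < ε := by rw [hηdef]; linarith

lemma absExtensor_of_niceP {X : Type} [TopologicalSpace X] [CompactSpace X]
    [TopologicalSpace.MetrizableSpace X] {m : ℕ} (h : NiceP X m) :
    IsAbsExtensor X (↥(nSphere m)) := by
  letI : MetricSpace X := TopologicalSpace.metrizableSpaceMetric X
  intro A hAc f
  have hT : TietzeExtension (Euc (m+1)) := TietzeExtension.of_tvs ℝ
  obtain ⟨F, hF⟩ := ContinuousMap.exists_restrict_eq hAc
    (⟨fun a => (f a : Euc (m+1)), continuous_subtype_val.comp f.continuous⟩ : C(↥A, Euc (m+1)))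
  have hFA : ∀ a : ↥A, F ↑a = (f a : Euc (m+1)) := by
    intro a
    have := congrFun (congrArg DFunLike.coe hF) a
    simpa using this
  have hfn : ∀ a : ↥A, ‖F (↑a : X)‖ = 1 := by
    intro a; rw [hFA a]; exact mem_nSphere_iff.1 (f a).2
  obtain ⟨F', hF'0, hF'⟩ := h F (1/2) (by norm_num)
  set C : Set X := {x | ‖F x‖ ≤ 1/2} with hC
  have hCc : IsClosed C := isClosed_le F.continuous.norm continuous_const
  have hdisj : Disjoint C A := by
    rw [Set.disjoint_left]
    intro x hxC hxA
    have h1 := hfn ⟨x, hxA⟩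
    have h2 : ‖F x‖ ≤ 1/2 := hxC
    simp only at h1
    rw [h1] at h2
    norm_num at h2
  obtain ⟨u, hu0, hu1, hu01⟩ := exists_continuous_zero_one_of_isClosed hCc hAc hdisj
  set G : X → Euc (m+1) := fun x => F x + (1 - u x) • (F' x - F x) with hG
  have hGc : Continuous G :=
    F.continuous.add (((continuous_const.sub u.continuous)).smul
      (F'.continuous.sub F.continuous))
  have hG0 : ∀ x, G x ≠ 0 := by
    intro x
    by_cases hu : u x = 0
    · rw [hG]; simp only [hu, sub_zero, one_smul]
      rw [add_sub_cancel]
      exact hF'0 x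
    · have hxC : x ∉ C := fun hxc => hu (hu0 hxc)
      have hFx : 1/2 < ‖F x‖ := lt_of_not_ge (fun hle => hxC hle)
      have h1u : |1 - u x| ≤ 1 := by
        have := hu01 x
        rw [abs_le]; constructor <;> [linarith [this.2]; linarith [this.1]]
      have : ‖(1 - u x) • (F' x - F x)‖ < 1/2 := by
        rw [norm_smul, Real.norm_eq_abs]
        calc |1 - u x| * ‖F' x - F x‖ ≤ 1 * ‖F' x - F x‖ :=
              mul_le_mul_of_nonneg_right h1u (norm_nonneg _)
          _ = ‖F' x - F x‖ := one_mul _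
          _ < 1/2 := hF' x
      intro hzero
      have h2 : F x + (1 - u x) • (F' x - F x) = 0 := hzero
      have h3 : F x = -((1 - u x) • (F' x - F x)) := eq_neg_of_add_eq_zero_left h2
      have h4 : ‖F x‖ = ‖(1 - u x) • (F' x - F x)‖ := by
        conv_lhs => rw [h3]
        exact norm_neg _
      linarith
  have hGA : ∀ a : ↥A, G ↑a = (f a : Euc (m+1)) := by
    intro a
    rw [hG]
    simp only [hu1 a.2, Pi.one_apply]
    rw [sub_self, zero_smul, add_zero, hFA]
  refine ⟨⟨fun x => (⟨‖G x‖⁻¹ • G x, ?_⟩ : ↥(nSphere m)), ?_⟩, ?_⟩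
  · rw [mem_nSphere_iff, norm_smul, norm_inv, norm_norm,
      inv_mul_cancel₀ (norm_ne_zero_iff.2 (hG0 x))]
  · exact Continuous.subtype_mk
      ((hGc.norm.inv₀ (fun x => norm_ne_zero_iff.2 (hG0 x))).smul hGc) _
  · intro a
    apply Subtype.ext
    simp only [ContinuousMap.coe_mk]
    rw [hGA a]
    have : ‖(f a : Euc (m+1))‖ = 1 := mem_nSphere_iff.1 (f a).2
    rw [this]
    norm_num

lemma niceP_succ {X : Type} [TopologicalSpace X] {m : ℕ} (h : NiceP X m) : NiceP X (m+1) := by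
  intro F ε hε
  have hFhc : Continuous fun x => (WithLp.toLp 2 (fun j : Fin (m+1) => F x j.succ) : Euc (m+1)) :=
    continuous_toEuc fun j => (continuous_eucApply j.succ).comp F.continuous
  obtain ⟨G, hG0, hGa⟩ := h ⟨_, hFhc⟩ ε hε
  have hF'c : Continuous fun x =>
      (WithLp.toLp 2 (fun i : Fin (m+2) => Fin.cases (F x 0) (fun j => G x j) i) : Euc (m+2)) := by
    refine continuous_toEuc fun i => ?_
    induction i using Fin.cases with
    | zero => simpa [Function.comp_def] using (continuous_eucApply (0 : Fin (m+2))).comp F.continuous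
    | succ j => simpa [Function.comp_def] using (continuous_eucApply j).comp G.continuous
  refine ⟨⟨_, hF'c⟩, ?_, ?_⟩
  · intro x hzero
    apply hG0 x
    ext j
    have := congrArg (fun v => v j.succ) hzero
    simpa using this
  · intro x
    have hGx := hGa x
    have hnorm : ‖(⟨_, hF'c⟩ : C(X, Euc (m+2))) x - F x‖
        = ‖G x - (⟨_, hFhc⟩ : C(X, Euc (m+1))) x‖ := by
      rw [EuclideanSpace.norm_eq, EuclideanSpace.norm_eq]
      congr 1
      rw [Fin.sum_univ_succ]
      simp only [ContinuousMap.coe_mk, PiLp.sub_apply, Fin.cases_zero, Fin.cases_succ,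
        sub_self, norm_zero]
      norm_num
    rw [hnorm]
    exact hGx

lemma niceP_mono {X : Type} [TopologicalSpace X] {n m : ℕ} (hnm : n ≤ m) (h : NiceP X n) :
    NiceP X m := by
  induction m, hnm using Nat.le_induction with
  | base => exact h
  | succ m hm ih => exact niceP_succ ih

end AEaux
noncomputable section GPaux
open Set MeasureTheory

lemma not_mem_affineSpan_empty {E : Type*} [NormedAddCommGroup E] [NormedSpace ℝ E] (x : E) :
    x ∉ affineSpan ℝ (∅ : Set E) := by
  rw [AffineSubspace.span_empty]
  exact fun h => h

lemma bad_set_null {n : ℕ} (A : Set (Euc (n+1))) (hA : A.Finite) (hcard : A.ncard ≤ n)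
    (h0 : (0 : Euc (n+1)) ∉ affineSpan ℝ A) :
    volume {z : Euc (n+1) | (0 : Euc (n+1)) ∈ affineSpan ℝ (insert z A)} = 0 := by
  rcases A.eq_empty_or_nonempty with rfl | ⟨a₀, ha₀⟩
  · have : {z : Euc (n+1) | (0 : Euc (n+1)) ∈ affineSpan ℝ (insert z ∅)} ⊆ {(0 : Euc (n+1))} := by
      intro z hz
      simp only [LawfulSingleton.insert_empty_eq, mem_setOf_eq] at hz
      have := (AffineSubspace.mem_affineSpan_singleton ℝ _).mp hz
      simp [this.symm]
    exact measure_mono_null this (measure_singleton _)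
  · set D : Submodule ℝ (Euc (n+1)) :=
      Submodule.span ℝ (insert a₀ ((fun b => b - a₀) '' (A \ {a₀}))) with hD
    have hWD : Submodule.span ℝ ((fun b => b - a₀) '' (A \ {a₀})) ≤ D :=
      Submodule.span_mono (subset_insert _ _)
    have hA1 : 1 ≤ A.ncard := (Set.ncard_pos hA).2 ⟨a₀, ha₀⟩
    -- D is proper
    have hDne : D ≠ ⊤ := by
      intro htop
      have hfin : Module.finrank ℝ D ≤ n := by
        have hgen : (insert a₀ ((fun b => b - a₀) '' (A \ {a₀}))).Finite :=
          ((hA.subset diff_subset).image _).insert _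
        haveI := hgen.fintype
        have h1 := finrank_span_le_card (R := ℝ) (insert a₀ ((fun b => b - a₀) '' (A \ {a₀})))
        rw [← Set.ncard_eq_toFinset_card'] at h1
        refine h1.trans ?_
        have h2 : (insert a₀ ((fun b => b - a₀) '' (A \ {a₀}))).ncard
            ≤ ((fun b => b - a₀) '' (A \ {a₀})).ncard + 1 :=
          Set.ncard_insert_le _ _
        have h3 : ((fun b => b - a₀) '' (A \ {a₀})).ncard ≤ (A \ {a₀}).ncard :=
          Set.ncard_image_le (hA.subset diff_subset)
        have h4 : (A \ {a₀}).ncard = A.ncard - 1 := Set.ncard_diff_singleton_of_mem ha₀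
        omega
      rw [htop] at hfin
      rw [finrank_top] at hfin
      simp [finrank_euclideanSpace_fin] at hfin
    -- the bad set is contained in the coset a₀ + D
    set Q : AffineSubspace ℝ (Euc (n+1)) := AffineSubspace.mk' a₀ D with hQ
    have hQne : Q ≠ ⊤ := by
      intro htop
      apply hDne
      have := congrArg AffineSubspace.direction htop
      rwa [AffineSubspace.direction_mk', AffineSubspace.direction_top] at this
    refine measure_mono_null ?_ (Measure.addHaar_affineSubspace volume Q hQne)
    intro z hz
    simp only [mem_setOf_eq] at hz
    -- 0 - a₀ ∈ vectorSpan of insert z A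
    have hmemA : a₀ ∈ insert z A := Set.mem_insert_of_mem _ ha₀
    have hva : (0 : Euc (n+1)) -ᵥ a₀ ∈ (affineSpan ℝ (insert z A)).direction :=
      AffineSubspace.vsub_mem_direction hz (mem_affineSpan ℝ hmemA)
    rw [direction_affineSpan, vectorSpan_eq_span_vsub_set_right_ne ℝ hmemA] at hva
    have hsub : (fun b => b -ᵥ a₀) '' (insert z A \ {a₀})
        ⊆ insert (z - a₀) ((fun b => b - a₀) '' (A \ {a₀})) := by
      rintro _ ⟨b, hb, rfl⟩
      rcases hb.1 with rfl | hbA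
      · exact Set.mem_insert _ _
      · exact Set.mem_insert_of_mem _ ⟨b, ⟨hbA, hb.2⟩, rfl⟩
    have hva2 : -a₀ ∈ Submodule.span ℝ
        (insert (z - a₀) ((fun b => b - a₀) '' (A \ {a₀}))) := by
      have := Submodule.span_mono hsub hva
      simpa [vsub_eq_sub] using this
    rw [Submodule.span_insert] at hva2
    obtain ⟨v, hv, w, hw, hvw⟩ := Submodule.mem_sup.mp hva2
    obtain ⟨r, rfl⟩ := Submodule.mem_span_singleton.mp hv
    by_cases hr : r = 0
    · exfalso
      apply h0
      subst hr
      rw [zero_smul, zero_add] at hvw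
      have hw' : (0 : Euc (n+1)) -ᵥ a₀ ∈ vectorSpan ℝ A := by
        rw [vectorSpan_eq_span_vsub_set_right_ne ℝ ha₀]
        have : (fun b => b -ᵥ a₀) '' (A \ {a₀}) = (fun b => b - a₀) '' (A \ {a₀}) := by
          simp [vsub_eq_sub]
        rw [this]
        simpa [vsub_eq_sub, ← hvw] using hw
      rw [← direction_affineSpan] at hw'
      have := (AffineSubspace.vsub_right_mem_direction_iff_mem
        (mem_affineSpan ℝ ha₀) (0 : Euc (n+1))).mp hw'
      exact this
    · -- z - a₀ ∈ D
      have hzD : z - a₀ ∈ D := by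
        have h1 : r • (z - a₀) = -a₀ - w := by rw [← hvw]; abel
        have h2 : z - a₀ = r⁻¹ • (-a₀ - w) := by
          rw [← h1, smul_smul, inv_mul_cancel₀ hr, one_smul]
        rw [h2]
        apply Submodule.smul_mem
        apply Submodule.sub_mem
        · exact Submodule.neg_mem _ (Submodule.subset_span (Set.mem_insert _ _))
        · exact hWD hw
      show z ∈ Q
      rw [hQ, AffineSubspace.mem_mk']
      simpa [vsub_eq_sub] using hzD

lemma exists_general_position {ι : Type} [Fintype ι] (n : ℕ) (q : ι → Euc (n+1)) {δ : ℝ}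
    (hδ : 0 < δ) :
    ∃ c : ι → Euc (n+1), (∀ i, ‖c i - q i‖ < δ) ∧
      ∀ s : Finset ι, s.card ≤ n + 1 → (0 : Euc (n+1)) ∉ affineSpan ℝ (c '' ↑s) := by
  suffices H : ∀ t : Finset ι, ∃ c : ι → Euc (n+1), (∀ i, ‖c i - q i‖ < δ) ∧
      ∀ s ⊆ t, s.card ≤ n + 1 → (0 : Euc (n+1)) ∉ affineSpan ℝ (c '' ↑s) by
    obtain ⟨c, h1, h2⟩ := H Finset.univ
    exact ⟨c, h1, fun s hs => h2 s (Finset.subset_univ s) hs⟩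
  intro t
  classical
  induction t using Finset.induction_on with
  | empty =>
    refine ⟨q, fun i => by simpa using hδ, fun s hs _ => ?_⟩
    rw [Finset.subset_empty.mp hs]
    simpa using not_mem_affineSpan_empty (0 : Euc (n+1))
  | @insert a t ha ih =>
    obtain ⟨c, hcq, hcgp⟩ := ih
    set bad : Set (Euc (n+1)) :=
      ⋃ s' ∈ ((t.powerset.filter fun s' => s'.card ≤ n) : Finset (Finset ι)),
        {z : Euc (n+1) | (0 : Euc (n+1)) ∈ affineSpan ℝ (insert z (c '' ↑s'))} with hbad
    have hbadnull : volume bad = 0 := by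
      refine (measure_biUnion_null_iff
        (Finset.countable_toSet _)).2 ?_
      intro s' hs'
      simp only [Finset.mem_coe, Finset.mem_filter, Finset.mem_powerset] at hs'
      refine bad_set_null _ ((s' : Set ι).toFinite.image c) ?_ ?_
      · refine (Set.ncard_image_le (s' : Set ι).toFinite).trans ?_
        rw [Set.ncard_coe_finset]
        exact hs'.2
      · exact hcgp s' hs'.1 (le_trans hs'.2 (Nat.le_succ n))
    have hball : 0 < volume (Metric.ball (q a) δ) := Metric.measure_ball_pos volume (q a) hδ
    have hnsub : ¬ Metric.ball (q a) δ ⊆ bad :=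
      fun hsub => absurd (measure_mono_null hsub hbadnull) (ne_of_gt hball)
    obtain ⟨z, hzball, hzbad⟩ := Set.not_subset.mp hnsub
    refine ⟨Function.update c a z, ?_, ?_⟩
    · intro i
      rcases eq_or_ne i a with rfl | hne
      · rw [Function.update_self, ← dist_eq_norm]
        exact Metric.mem_ball.mp hzball
      · rw [Function.update_of_ne hne]
        exact hcq i
    · intro s hs hcard
      by_cases has : a ∈ s
      · have hs' : s.erase a ⊆ t := by
          intro i hi
          have h2 := hs (Finset.mem_of_mem_erase hi)
          rcases Finset.mem_insert.mp h2 with rfl | h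
          · exact absurd rfl (Finset.ne_of_mem_erase hi)
          · exact h
        have himg : Function.update c a z '' ↑s = insert z (c '' ↑(s.erase a)) := by
          ext v
          constructor
          · rintro ⟨i, hi, rfl⟩
            rcases eq_or_ne i a with rfl | hne
            · rw [Function.update_self]
              exact Set.mem_insert _ _
            · rw [Function.update_of_ne hne]
              refine Set.mem_insert_of_mem _ ⟨i, ?_, rfl⟩
              exact Finset.mem_coe.mpr (Finset.mem_erase.mpr ⟨hne, hi⟩)
          · rintro (rfl | ⟨i, hi, rfl⟩)
            · exact ⟨a, Finset.mem_coe.mpr has, Function.update_self a v c⟩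
            · have hne : i ≠ a := Finset.ne_of_mem_erase hi
              exact ⟨i, Finset.mem_coe.mpr (Finset.mem_of_mem_erase hi),
                Function.update_of_ne hne _ _⟩
        rw [himg]
        intro h0
        apply hzbad
        rw [hbad]
        have hce := Finset.card_erase_of_mem has
        have hmem : s.erase a ∈ (t.powerset.filter fun s' => s'.card ≤ n) := by
          rw [Finset.mem_filter, Finset.mem_powerset]
          exact ⟨hs', by omega⟩
        exact Set.mem_biUnion hmem h0
      · have hsub' : s ⊆ t := by
          intro i hi
          rcases Finset.mem_insert.mp (hs hi) with rfl | h
          · exact absurd hi has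
          · exact h
        have himg : Function.update c a z '' ↑s = c '' ↑s := by
          apply Set.image_congr
          intro i hi
          have hne : i ≠ a := by
            rintro rfl
            exact has (Finset.mem_coe.mp hi)
          exact Function.update_of_ne hne _ _
        rw [himg]
        exact hcgp s hsub' hcard
noncomputable section CovDimToNiceP
open Set MeasureTheory

lemma niceP_of_covDim {X : Type} [TopologicalSpace X] [CompactSpace X]
    [TopologicalSpace.MetrizableSpace X] {n : ℕ} (hdim : CovDimLE X n) : NiceP X n := by
  letI : MetricSpace X := TopologicalSpace.metrizableSpaceMetric X
  intro F ε hε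
  classical
  -- finite cover by small-oscillation sets
  have hcov : (Set.univ : Set X) ⊆ ⋃ y : X, F ⁻¹' Metric.ball (F y) (ε/4) := by
    intro x _
    exact Set.mem_iUnion.mpr ⟨x, by simp [Metric.mem_ball]; positivity⟩
  obtain ⟨t, ht⟩ := IsCompact.elim_finite_subcover isCompact_univ
    (fun y : X => F ⁻¹' Metric.ball (F y) (ε/4))
    (fun y => F.continuous.isOpen_preimage _ Metric.isOpen_ball) hcov
  set U : Set (Set X) := (fun y => F ⁻¹' Metric.ball (F y) (ε/4)) '' ↑t with hU
  have hUfin : U.Finite := (t.finite_toSet).image _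
  have hUopen : ∀ u ∈ U, IsOpen u := by
    rintro _ ⟨y, _, rfl⟩
    exact F.continuous.isOpen_preimage _ Metric.isOpen_ball
  have hUcover : ⋃₀ U = Set.univ := by
    apply Set.eq_univ_of_univ_subset
    intro x hx
    obtain ⟨y, hyt, hxy⟩ := Set.mem_iUnion₂.mp (ht hx)
    exact ⟨F ⁻¹' Metric.ball (F y) (ε/4), ⟨y, hyt, rfl⟩, hxy⟩
  obtain ⟨V, hVfin, hVopen, hVcover, hVref, hVorder⟩ := hdim U hUfin hUopen hUcover
  letI : Fintype ↥V := hVfin.fintype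
  have hVunion : (Set.univ : Set X) ⊆ ⋃ i : ↥V, (i : Set X) := by
    rw [← Set.sUnion_eq_iUnion, hVcover]
  obtain ⟨f, hfsub⟩ := PartitionOfUnity.exists_isSubordinate isClosed_univ
    (fun i : ↥V => (i : Set X)) (fun i => hVopen _ i.2) hVunion
  have hsum1 : ∀ x : X, ∑ i : ↥V, f i x = 1 := by
    intro x
    have := f.sum_eq_one (Set.mem_univ x)
    rwa [finsum_eq_sum_of_fintype] at this
  -- choose centers
  have hchoice : ∀ i : ↥V, ∃ y : X, y ∈ t ∧ (i : Set X) ⊆ F ⁻¹' Metric.ball (F y) (ε/4) := by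
    intro i
    obtain ⟨u, huU, hiu⟩ := hVref _ i.2
    obtain ⟨y, hyt, rfl⟩ := huU
    exact ⟨y, hyt, hiu⟩
  choose y hyt hysub using hchoice
  set q : ↥V → Euc (n+1) := fun i => F (y i) with hq
  obtain ⟨c, hc_close, hcgp⟩ := exists_general_position n q (show (0:ℝ) < ε/4 by positivity)
  set F' : X → Euc (n+1) := fun x => ∑ i : ↥V, f i x • c i with hF'
  have hF'c : Continuous F' := by
    apply continuous_finset_sum
    intro i _
    exact ((f i).continuous).smul continuous_const
  have hSsub : ∀ x : X, ∀ i : ↥V, f i x ≠ 0 → x ∈ (i : Set X) := by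
    intro x i hi
    exact hfsub i (subset_tsupport _ (by exact hi))
  have hcard : ∀ x : X, (Finset.univ.filter fun i : ↥V => f i x ≠ 0).card ≤ n + 1 := by
    intro x
    set Sx := Finset.univ.filter fun i : ↥V => f i x ≠ 0 with hSx
    have hinj : Set.InjOn (fun i : ↥V => (i : Set X)) ↑(Sx.image id) := fun i _ j _ h =>
      Subtype.ext h
    calc Sx.card = (Sx.image (fun i : ↥V => (i : Set X))).card :=
          (Finset.card_image_of_injective _ (fun i j h => Subtype.ext h)).symm
      _ = ((Sx.image (fun i : ↥V => (i : Set X)) : Finset (Set X)) : Set (Set X)).ncard := by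
          rw [Set.ncard_coe_finset]
      _ ≤ {v ∈ V | x ∈ v}.ncard := by
          apply Set.ncard_le_ncard
          · intro v hv
            obtain ⟨i, hiSx, rfl⟩ := Finset.mem_image.mp (Finset.mem_coe.mp hv)
            have : f i x ≠ 0 := (Finset.mem_filter.mp hiSx).2
            exact ⟨i.2, hSsub x i this⟩
          · exact hVfin.subset (fun v hv => hv.1)
      _ ≤ n + 1 := hVorder x
  refine ⟨⟨F', hF'c⟩, ?_, ?_⟩
  · -- nonvanishing
    intro x h0
    simp only [ContinuousMap.coe_mk] at h0
    set Sx := Finset.univ.filter fun i : ↥V => f i x ≠ 0 with hSx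
    have hsum' : ∑ i ∈ Sx, f i x • c i = F' x := by
      rw [hF']
      apply Finset.sum_subset (Finset.subset_univ _)
      intro i _ hi
      have : f i x = 0 := by
        by_contra hne
        exact hi (Finset.mem_filter.mpr ⟨Finset.mem_univ _, hne⟩)
      rw [this, zero_smul]
    have hwsum : ∑ i ∈ Sx, f i x = 1 := by
      rw [← hsum1 x]
      apply Finset.sum_subset (Finset.subset_univ _)
      intro i _ hi
      by_contra hne
      exact hi (Finset.mem_filter.mpr ⟨Finset.mem_univ _, hne⟩)
    have hmem : F' x ∈ convexHull ℝ (c '' ↑Sx) := by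
      rw [← hsum', ← Finset.centerMass_eq_of_sum_1 _ _ hwsum]
      exact Finset.centerMass_mem_convexHull _ (fun i _ => f.nonneg i x)
        (by rw [hwsum]; norm_num) (fun i hi => Set.mem_image_of_mem c (Finset.mem_coe.mpr hi))
    rw [h0] at hmem
    exact hcgp Sx (hcard x) (convexHull_subset_affineSpan _ hmem)
  · -- approximation
    intro x
    simp only [ContinuousMap.coe_mk]
    have key : F' x - F x = ∑ i : ↥V, f i x • (c i - F x) := by
      have h2 : ∑ i : ↥V, f i x • (c i - F x)
          = (∑ i : ↥V, f i x • c i) - (∑ i : ↥V, f i x) • F x := by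
        rw [Finset.sum_smul, ← Finset.sum_sub_distrib]
        simp [smul_sub]
      rw [h2, hsum1 x, one_smul, hF']
    show ‖F' x - F x‖ < ε
    rw [key]
    calc ‖∑ i : ↥V, f i x • (c i - F x)‖ ≤ ∑ i : ↥V, ‖f i x • (c i - F x)‖ :=
          norm_sum_le _ _
      _ = ∑ i : ↥V, f i x * ‖c i - F x‖ := by
          refine Finset.sum_congr rfl fun i _ => ?_
          rw [norm_smul, Real.norm_eq_abs, abs_of_nonneg (f.nonneg i x)]
      _ ≤ ∑ i : ↥V, f i x * (ε/2) := by
          refine Finset.sum_le_sum fun i _ => ?_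
          by_cases hfi : f i x = 0
          · simp [hfi]
          · have hx_i : x ∈ (i : Set X) := hSsub x i hfi
            have hxb : dist (F x) (F (y i)) < ε/4 := Metric.mem_ball.mp (hysub i hx_i)
            have h1 : ‖c i - F x‖ ≤ ‖c i - q i‖ + ‖q i - F x‖ := by
              have := norm_add_le (c i - q i) (q i - F x)
              rwa [sub_add_sub_cancel] at this
            have h2 : ‖q i - F x‖ = dist (F x) (F (y i)) := by
              rw [hq, dist_comm, dist_eq_norm]
            have h3 : ‖c i - F x‖ ≤ ε/2 := by
              have := hc_close i
              rw [h2] at h1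
              linarith
            exact mul_le_mul_of_nonneg_left h3 (f.nonneg i x)
      _ = ε/2 := by rw [← Finset.sum_mul, hsum1 x, one_mul]
      _ < ε := by linarith
noncomputable section SimplexBody
open Set Metric

/-- The solid simplex `{y : 0 ≤ y, ∑ y ≤ 1}` in `ℝ^m`. -/
def Tbody (m : ℕ) : Set (Euc m) := {y | (∀ i, 0 ≤ y i) ∧ ∑ i, y i ≤ 1}

/-- its combinatorial interior -/
def Obody (m : ℕ) : Set (Euc m) := {y | (∀ i, 0 < y i) ∧ ∑ i, y i < 1}

lemma isLinearMap_eucApply (m : ℕ) (i : Fin m) : IsLinearMap ℝ (fun y : Euc m => y i) :=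
  ⟨fun x y => rfl, fun c x => rfl⟩

lemma isLinearMap_eucSum (m : ℕ) : IsLinearMap ℝ (fun y : Euc m => ∑ i, y i) := by
  constructor
  · intro x y
    rw [← Finset.sum_add_distrib]
    rfl
  · intro c x
    simp only [smul_eq_mul, Finset.mul_sum]
    rfl

lemma continuous_eucSum (m : ℕ) : Continuous (fun y : Euc m => ∑ i, y i) :=
  continuous_finset_sum _ fun i _ => continuous_eucApply i

lemma convex_Tbody (m : ℕ) : Convex ℝ (Tbody m) := by
  have h1 : Tbody m = (⋂ i, {y : Euc m | 0 ≤ y i}) ∩ {y : Euc m | ∑ i, y i ≤ 1} := by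
    ext y
    simp [Tbody, Set.mem_iInter]
  rw [h1]
  exact (convex_iInter fun i => convex_halfSpace_ge (isLinearMap_eucApply m i) 0).inter
    (convex_halfSpace_le (isLinearMap_eucSum m) 1)

lemma isClosed_Tbody (m : ℕ) : IsClosed (Tbody m) := by
  have h1 : Tbody m = (⋂ i, {y : Euc m | 0 ≤ y i}) ∩ {y : Euc m | ∑ i, y i ≤ 1} := by
    ext y
    simp [Tbody, Set.mem_iInter]
  rw [h1]
  exact ((isClosed_iInter fun i =>
    isClosed_le continuous_const (continuous_eucApply i))).inter
    (isClosed_le (continuous_eucSum m) continuous_const)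

lemma isOpen_Obody (m : ℕ) : IsOpen (Obody m) := by
  have h1 : Obody m = (⋂ i, {y : Euc m | 0 < y i}) ∩ {y : Euc m | ∑ i, y i < 1} := by
    ext y
    simp [Obody, Set.mem_iInter]
  rw [h1]
  exact ((isOpen_iInter_of_finite fun i =>
    isOpen_lt continuous_const (continuous_eucApply i))).inter
    (isOpen_lt (continuous_eucSum m) continuous_const)

lemma bounded_Tbody (m : ℕ) : Bornology.IsBounded (Tbody m) := by
  rw [Metric.isBounded_iff_subset_closedBall 0]
  refine ⟨Real.sqrt m, fun y hy => ?_⟩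
  have hyb : ∀ i, ‖y i‖ ≤ 1 := by
    intro i
    rw [Real.norm_eq_abs, abs_of_nonneg (hy.1 i)]
    calc y i ≤ ∑ j, y j := Finset.single_le_sum (fun j _ => hy.1 j) (Finset.mem_univ i)
      _ ≤ 1 := hy.2
  have : ‖y‖ ≤ Real.sqrt m := by
    rw [EuclideanSpace.norm_eq]
    apply Real.sqrt_le_sqrt
    calc ∑ i, ‖y i‖ ^ 2 ≤ ∑ _i : Fin m, 1 := by
          refine Finset.sum_le_sum fun i _ => ?_
          have := hyb i
          nlinarith [norm_nonneg (y i)]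
      _ = m := by simp
  simpa [Metric.mem_closedBall, dist_eq_norm] using this

lemma vonNBounded_Tbody (m : ℕ) : Bornology.IsVonNBounded ℝ (Tbody m) :=
  (NormedSpace.isVonNBounded_iff ℝ).mpr (bounded_Tbody m)

lemma interior_Tbody {m : ℕ} (hm : 1 ≤ m) : interior (Tbody m) = Obody m := by
  apply Subset.antisymm
  · intro y hy
    obtain ⟨ε, hε, hball⟩ := Metric.isOpen_iff.mp isOpen_interior y hy
    have hyT : y ∈ Tbody m := interior_subset hy
    constructor
    · intro i
      have hmem : (y - (ε/2) • EuclideanSpace.single i (1:ℝ)) ∈ Tbody m := by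
        apply interior_subset
        apply hball
        rw [Metric.mem_ball, dist_eq_norm]
        have : y - (ε/2) • EuclideanSpace.single i (1:ℝ) - y
            = -((ε/2) • EuclideanSpace.single i (1:ℝ)) := by abel
        rw [this, norm_neg, norm_smul, EuclideanSpace.norm_single]
        simp [abs_of_pos hε]
        linarith
      have h0 := hmem.1 i
      have hcoord : (y - (ε/2) • EuclideanSpace.single i (1:ℝ)) i = y i - ε/2 := by
        simp [EuclideanSpace.single_apply]
      rw [hcoord] at h0
      linarith
    · set i0 : Fin m := ⟨0, hm⟩
      have hmem : (y + (ε/2) • EuclideanSpace.single i0 (1:ℝ)) ∈ Tbody m := by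
        apply interior_subset
        apply hball
        rw [Metric.mem_ball, dist_eq_norm]
        have : y + (ε/2) • EuclideanSpace.single i0 (1:ℝ) - y
            = (ε/2) • EuclideanSpace.single i0 (1:ℝ) := by abel
        rw [this, norm_smul, EuclideanSpace.norm_single]
        simp [abs_of_pos hε]
        linarith
      have hsum := hmem.2
      have hsum2 : ∑ j, (y + (ε/2) • EuclideanSpace.single i0 (1:ℝ)) j
          = (∑ j, y j) + ε/2 := by
        have hterm : ∀ j, (y + (ε/2) • EuclideanSpace.single i0 (1:ℝ)) j
            = y j + (ε/2) * (if j = i0 then 1 else 0) := by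
          intro j
          simp [EuclideanSpace.single_apply]
        rw [Finset.sum_congr rfl fun j _ => hterm j, Finset.sum_add_distrib]
        congr 1
        rw [← Finset.mul_sum]
        simp
      rw [hsum2] at hsum
      linarith
  · intro y hy
    apply mem_interior_iff_mem_nhds.mpr
    apply Filter.mem_of_superset ((isOpen_Obody m).mem_nhds hy)
    intro z hz
    exact ⟨fun i => (hz.1 i).le, hz.2.le⟩

lemma frontier_Tbody {m : ℕ} (hm : 1 ≤ m) :
    frontier (Tbody m) = {y ∈ Tbody m | (∃ i, y i = 0) ∨ ∑ i, y i = 1} := by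
  rw [(isClosed_Tbody m).frontier_eq, interior_Tbody hm]
  ext y
  simp only [mem_diff, Obody, mem_setOf_eq, Tbody, not_and, not_lt, mem_sep_iff]
  constructor
  · rintro ⟨⟨hnn, hs⟩, hno⟩
    refine ⟨⟨hnn, hs⟩, ?_⟩
    by_cases hall : ∀ i, 0 < y i
    · exact Or.inr (le_antisymm hs (hno hall))
    · push_neg at hall
      obtain ⟨i, hi⟩ := hall
      exact Or.inl ⟨i, le_antisymm hi (hnn i)⟩
  · rintro ⟨⟨hnn, hs⟩, h⟩
    refine ⟨⟨hnn, hs⟩, ?_⟩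
    intro hall
    rcases h with ⟨i, hi⟩ | hsum
    · exact absurd hi (ne_of_gt (hall i))
    · exact hsum.ge

lemma nonempty_interior_Tbody {m : ℕ} (hm : 1 ≤ m) : (interior (Tbody m)).Nonempty := by
  rw [interior_Tbody hm]
  refine ⟨(WithLp.toLp 2 (fun _ => 1/(2*m)) : Euc m), ?_, ?_⟩
  · intro i
    positivity
  · rw [Finset.sum_const]
    simp only [Finset.card_univ, Fintype.card_fin, nsmul_eq_mul]
    rw [div_eq_mul_inv, one_mul]
    rw [show ((m:ℝ)) * (2*(m:ℝ))⁻¹ = (m:ℝ)/(2*m) by ring]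
    rw [div_lt_one (by positivity)]
    have : (1:ℝ) ≤ m := by exact_mod_cast hm
    linarith

/-- A homeomorphism of `ℝ^m` carrying the frontier of the simplex body onto the unit sphere. -/
lemma exists_sphere_homeo {m : ℕ} (hm : 1 ≤ m) :
    ∃ e : Euc m ≃ₜ Euc m, e '' frontier (Tbody m) = Metric.sphere (0 : Euc m) 1 := by
  haveI : Nontrivial (Euc m) := by
    refine ⟨0, EuclideanSpace.single ⟨0, hm⟩ (1:ℝ), ?_⟩
    intro h
    have := congrArg norm h
    rw [norm_zero, EuclideanSpace.norm_single] at this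
    norm_num at this
  obtain ⟨e, -, -, he⟩ := exists_homeomorph_image_eq (convex_Tbody m)
    (nonempty_interior_Tbody hm) (vonNBounded_Tbody m)
    (convex_closedBall (0 : Euc m) 1)
    (by rw [interior_closedBall (0 : Euc m) one_ne_zero]
        exact ⟨0, Metric.mem_ball_self one_pos⟩)
    ((NormedSpace.isVonNBounded_iff ℝ).mpr Metric.isBounded_closedBall)
  exact ⟨e, by rw [he, frontier_closedBall (0 : Euc m) one_ne_zero]⟩

end SimplexBody
noncomputable section SweepPush
open Set

lemma sweep_push {X : Type} [TopologicalSpace X] {ι : Type} [Fintype ι] [DecidableEq ι]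
    {d : ℕ} (hτ : IsAbsExtensor X (↥(nSphere d)))
    (φ : ι → X → ℝ) (ψ : X → ι → ℝ) (S : Finset ι) (hS : S.card = d + 2)
    (hc : Continuous ψ) (hnn : ∀ x i, 0 ≤ ψ x i) (hs1 : ∀ x, ∑ i, ψ x i = 1)
    (hcard : ∀ x, (Finset.univ.filter fun i => ψ x i ≠ 0).card ≤ d + 2)
    (hcar : ∀ x i, ψ x i ≠ 0 → φ i x ≠ 0) :
    ∃ ψ' : X → ι → ℝ, Continuous ψ' ∧ (∀ x i, 0 ≤ ψ' x i) ∧ (∀ x, ∑ i, ψ' x i = 1) ∧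
      (∀ x i, ψ' x i ≠ 0 → φ i x ≠ 0) ∧
      (∀ x, ((Finset.univ.filter fun i => ψ' x i ≠ 0) = (Finset.univ.filter fun i => ψ x i ≠ 0)
              ∧ ¬ (Finset.univ.filter fun i => ψ x i ≠ 0) ⊆ S)
            ∨ (Finset.univ.filter fun i => ψ' x i ≠ 0) ⊂ S) := by
  classical
  set eS : Fin (d+2) ≃ ↥S := (Finset.equivFinOfCardEq hS).symm with heS
  set Φ : (ι → ℝ) → Euc (d+1) :=
    fun p => (WithLp.toLp 2 (fun j : Fin (d+1) => p ↑(eS j.castSucc)) : Euc (d+1)) with hΦ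
  have hΦc : Continuous Φ := continuous_toEuc fun j => continuous_apply _
  -- sum over the simplex coordinates
  have sumS : ∀ p : ι → ℝ, (∀ i ∉ S, p i = 0) → ∑ a : Fin (d+2), p ↑(eS a) = ∑ i, p i := by
    intro p hp
    rw [Equiv.sum_comp eS (fun s : ↥S => p ↑s)]
    rw [Finset.sum_coe_sort S (fun i => p i)]
    exact Finset.sum_subset (Finset.subset_univ S) (fun i _ hi => hp i hi)
  have sumsplit : ∀ p : ι → ℝ, (∀ i ∉ S, p i = 0) →
      ∑ j : Fin (d+1), Φ p j = (∑ i, p i) - p ↑(eS (Fin.last (d+1))) := by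
    intro p hp
    have := sumS p hp
    rw [Fin.sum_univ_castSucc] at this
    have heq : ∀ j : Fin (d+1), Φ p j = p ↑(eS j.castSucc) := fun j => rfl
    rw [Finset.sum_congr rfl fun j _ => heq j]
    linarith
  -- the closed sets
  set σX : Set X := {x | ∀ i, i ∉ S → ψ x i = 0} with hσX
  have hσclosed : IsClosed σX := by
    have heq : σX = ⋂ i : ι, {x | i ∉ S → ψ x i = 0} := by
      ext x; simp [hσX, Set.mem_iInter]
    rw [heq]
    refine isClosed_iInter fun i => ?_
    by_cases hi : i ∈ S
    · have : {x : X | i ∉ S → ψ x i = 0} = Set.univ := by ext x; simp [hi]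
      rw [this]; exact isClosed_univ
    · have : {x : X | i ∉ S → ψ x i = 0} = {x | ψ x i = 0} := by ext x; simp [hi]
      rw [this]
      exact isClosed_eq ((continuous_apply i).comp hc) continuous_const
  set B : Set X := {x | x ∈ σX ∧ ∃ i ∈ S, ψ x i = 0} with hB
  have hBclosed : IsClosed B := by
    have heq : B = σX ∩ ⋃ i ∈ S, {x | ψ x i = 0} := by
      ext x
      simp only [hB, hσX, Set.mem_setOf_eq, Set.mem_inter_iff, Set.mem_iUnion]
      tauto
    rw [heq]
    exact hσclosed.inter (Set.Finite.isClosed_biUnion S.finite_toSet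
      (fun i _ => isClosed_eq ((continuous_apply i).comp hc) continuous_const))
  set W : Set X := {x | ∀ i ∈ S, ψ x i ≠ 0} with hW
  have hWopen : IsOpen W := by
    have heq : W = ⋂ i ∈ S, {x | ψ x i ≠ 0} := by
      ext x; simp [hW]
    rw [heq]
    exact Set.Finite.isOpen_biInter S.finite_toSet
      (fun i _ => (isOpen_ne).preimage ((continuous_apply i).comp hc))
  have hWspt : ∀ x ∈ W, (Finset.univ.filter fun i => ψ x i ≠ 0) = S := by
    intro x hx
    have hsub : S ⊆ Finset.univ.filter fun i => ψ x i ≠ 0 := by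
      intro i hi
      exact Finset.mem_filter.mpr ⟨Finset.mem_univ _, hx i hi⟩
    have := Finset.eq_of_subset_of_card_le hsub (by rw [hS]; exact hcard x)
    exact this.symm
  have hWσ : W ⊆ σX := by
    intro x hx i hi
    have hspt := hWspt x hx
    by_contra hne
    have : i ∈ Finset.univ.filter fun j => ψ x j ≠ 0 :=
      Finset.mem_filter.mpr ⟨Finset.mem_univ _, hne⟩
    rw [hspt] at this
    exact hi this
  have hσWB : ∀ x ∈ σX, x ∈ W ∨ x ∈ B := by
    intro x hx
    by_cases hw : ∀ i ∈ S, ψ x i ≠ 0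
    · exact Or.inl hw
    · push_neg at hw
      obtain ⟨i, hiS, hi0⟩ := hw
      exact Or.inr ⟨hx, i, hiS, not_not.mp (fun hne => hne hi0)⟩
  -- Φ maps σX to the body and B to the frontier
  have hΦT : ∀ x ∈ σX, Φ (ψ x) ∈ Tbody (d+1) := by
    intro x hx
    refine ⟨fun j => hnn x _, ?_⟩
    rw [sumsplit (ψ x) hx, hs1 x]
    have := hnn x ↑(eS (Fin.last (d+1)))
    linarith
  have hΦB : ∀ x ∈ B, Φ (ψ x) ∈ frontier (Tbody (d+1)) := by
    intro x hx
    rw [frontier_Tbody (by omega : 1 ≤ d+1)]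
    refine ⟨hΦT x hx.1, ?_⟩
    obtain ⟨i₀, hi₀S, hzero⟩ := hx.2
    rcases Fin.eq_castSucc_or_eq_last (eS.symm ⟨i₀, hi₀S⟩) with ⟨jj, hjj⟩ | hlast
    · left
      refine ⟨jj, ?_⟩
      show ψ x ↑(eS jj.castSucc) = 0
      rw [← hjj, Equiv.apply_symm_apply]
      exact hzero
    · right
      rw [sumsplit (ψ x) hx.1, hs1 x]
      have : (↑(eS (Fin.last (d+1))) : ι) = i₀ := by
        rw [← hlast, Equiv.apply_symm_apply]
      rw [this, hzero]
      ring
  -- the inverse parametrization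
  set Ψ : Euc (d+1) → (ι → ℝ) := fun y j =>
    if hj : j ∈ S then
      Fin.lastCases (1 - ∑ i, y i) (fun jj => y jj) (eS.symm ⟨j, hj⟩)
    else 0 with hΨ
  have hΨc : Continuous Ψ := by
    refine continuous_pi fun j => ?_
    by_cases hj : j ∈ S
    · simp only [hΨ, dif_pos hj]
      rcases Fin.eq_castSucc_or_eq_last (eS.symm ⟨j, hj⟩) with ⟨jj, hjj⟩ | hlast
      · rw [hjj]
        simp only [Fin.lastCases_castSucc]
        exact continuous_eucApply jj
      · rw [hlast]
        simp only [Fin.lastCases_last]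
        exact continuous_const.sub (continuous_eucSum (d+1))
    · simp only [hΨ, dif_neg hj]
      exact continuous_const
  have hΨcoe : ∀ (y : Euc (d+1)) (a : Fin (d+2)),
      Ψ y ↑(eS a) = Fin.lastCases (motive := fun _ => ℝ) (1 - ∑ i, y i) (fun jj => y jj) a := by
    intro y a
    have h1 : (↑(eS a) : ι) ∈ S := (eS a).2
    simp only [hΨ, dif_pos h1]
    congr 1
    rw [show (⟨↑(eS a), h1⟩ : ↥S) = eS a from rfl, Equiv.symm_apply_apply]
  have hΨsupp : ∀ (y : Euc (d+1)) (j : ι), j ∉ S → Ψ y j = 0 := by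
    intro y j hj
    simp only [hΨ, dif_neg hj]
  have hΨsum : ∀ y : Euc (d+1), ∑ j, Ψ y j = 1 := by
    intro y
    have h1 : ∑ j, Ψ y j = ∑ j ∈ S, Ψ y j :=
      (Finset.sum_subset (Finset.subset_univ S) (fun j _ hj => hΨsupp y j hj)).symm
    rw [h1, ← Finset.sum_coe_sort S (fun j => Ψ y j),
      ← Equiv.sum_comp eS (fun s : ↥S => Ψ y ↑s)]
    rw [Finset.sum_congr rfl fun a _ => hΨcoe y a]
    rw [Fin.sum_univ_castSucc]
    simp only [Fin.lastCases_castSucc, Fin.lastCases_last]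
    ring
  have hΨnn : ∀ y ∈ Tbody (d+1), ∀ j, 0 ≤ Ψ y j := by
    intro y hy j
    by_cases hj : j ∈ S
    · simp only [hΨ, dif_pos hj]
      rcases Fin.eq_castSucc_or_eq_last (eS.symm ⟨j, hj⟩) with ⟨jj, hjj⟩ | hlast
      · rw [hjj]
        simp only [Fin.lastCases_castSucc]
        exact hy.1 jj
      · rw [hlast]
        simp only [Fin.lastCases_last]
        linarith [hy.2]
    · simp only [hΨ, dif_neg hj]
      exact le_refl 0
  have hΨfront : ∀ y ∈ frontier (Tbody (d+1)), ∃ j ∈ S, Ψ y j = 0 := by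
    intro y hy
    rw [frontier_Tbody (by omega : 1 ≤ d+1)] at hy
    rcases hy.2 with ⟨i, hi⟩ | hsum
    · refine ⟨↑(eS i.castSucc), (eS i.castSucc).2, ?_⟩
      rw [hΨcoe y i.castSucc]
      simp only [Fin.lastCases_castSucc]
      exact hi
    · refine ⟨↑(eS (Fin.last (d+1))), (eS (Fin.last (d+1))).2, ?_⟩
      rw [hΨcoe y (Fin.last (d+1))]
      simp only [Fin.lastCases_last]
      rw [hsum]
      ring
  have hΨΦ : ∀ p : ι → ℝ, (∀ i ∉ S, p i = 0) → (∑ i, p i = 1) → Ψ (Φ p) = p := by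
    intro p hp hp1
    funext j
    by_cases hj : j ∈ S
    · simp only [hΨ, dif_pos hj]
      rcases Fin.eq_castSucc_or_eq_last (eS.symm ⟨j, hj⟩) with ⟨jj, hjj⟩ | hlast
      · rw [hjj]
        simp only [Fin.lastCases_castSucc]
        show p ↑(eS jj.castSucc) = p j
        rw [← hjj, Equiv.apply_symm_apply]
      · rw [hlast]
        simp only [Fin.lastCases_last]
        rw [sumsplit p hp, hp1]
        have : (↑(eS (Fin.last (d+1))) : ι) = j := by
          rw [← hlast, Equiv.apply_symm_apply]
        rw [this]
        ring
    · rw [hΨsupp (Φ p) j hj, hp j hj]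
  -- the sphere homeomorphism and the extension
  obtain ⟨e, he⟩ := exists_sphere_homeo (show 1 ≤ d+1 by omega)
  have hsphere : ∀ x ∈ B, e (Φ (ψ x)) ∈ nSphere d := by
    intro x hx
    show e (Φ (ψ x)) ∈ Metric.sphere (0 : Euc (d+1)) 1
    rw [← he]
    exact Set.mem_image_of_mem e (hΦB x hx)
  set fB : C(↥B, ↥(nSphere d)) :=
    ⟨fun b => ⟨e (Φ (ψ ↑b)), hsphere ↑b b.2⟩,
      Continuous.subtype_mk (e.continuous.comp (hΦc.comp (hc.comp continuous_subtype_val))) _⟩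
    with hfB
  obtain ⟨g, hg⟩ := hτ B hBclosed fB
  set r : X → ι → ℝ := fun x => Ψ (e.symm ↑(g x)) with hr
  have hrc : Continuous r :=
    hΨc.comp (e.symm.continuous.comp (continuous_subtype_val.comp g.continuous))
  have hgfront : ∀ x : X, (e.symm ↑(g x) : Euc (d+1)) ∈ frontier (Tbody (d+1)) := by
    intro x
    have h1 : (↑(g x) : Euc (d+1)) ∈ Metric.sphere (0 : Euc (d+1)) 1 := (g x).2
    rw [← he] at h1
    obtain ⟨w, hw, hew⟩ := h1
    rw [← hew, Homeomorph.symm_apply_apply]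
    exact hw
  have hrB : ∀ x (hx : x ∈ B), r x = ψ x := by
    intro x hx
    have h1 := hg ⟨x, hx⟩
    have h2 : (↑(g x) : Euc (d+1)) = e (Φ (ψ x)) := congrArg Subtype.val h1
    rw [hr]
    show Ψ (e.symm ↑(g x)) = ψ x
    rw [h2, Homeomorph.symm_apply_apply]
    exact hΨΦ (ψ x) hx.1 (hs1 x)
  -- glue
  set ψ' : X → ι → ℝ := σX.piecewise r ψ with hψ'
  have hfrσ : ∀ a ∈ frontier σX, r a = ψ a := by
    intro a ha
    have h1 : a ∈ σX \ W := by
      rw [hσclosed.frontier_eq] at ha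
      exact ⟨ha.1, fun hw => ha.2 (interior_maximal hWσ hWopen hw)⟩
    rcases hσWB a h1.1 with hw | hb
    · exact absurd hw h1.2
    · exact hrB a hb
  have hψ'c : Continuous ψ' := Continuous.piecewise hfrσ hrc hc
  have hfrontT : frontier (Tbody (d+1)) ⊆ Tbody (d+1) := (isClosed_Tbody (d+1)).frontier_subset
  have hrsupp : ∀ x, (Finset.univ.filter fun i => r x i ≠ 0) ⊂ S := by
    intro x
    have hsub : (Finset.univ.filter fun i => r x i ≠ 0) ⊆ S := by
      intro j hj
      by_contra hjS
      exact (Finset.mem_filter.mp hj).2 (hΨsupp _ j hjS)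
    obtain ⟨j₀, hj₀S, hj₀⟩ := hΨfront _ (hgfront x)
    refine (Finset.ssubset_iff_of_subset hsub).mpr ⟨j₀, hj₀S, ?_⟩
    intro hmem
    exact (Finset.mem_filter.mp hmem).2 hj₀
  refine ⟨ψ', hψ'c, ?_, ?_, ?_, ?_⟩
  · intro x i
    by_cases hx : x ∈ σX
    · rw [hψ', Set.piecewise_eq_of_mem _ _ _ hx]
      exact hΨnn _ (hfrontT (hgfront x)) i
    · rw [hψ', Set.piecewise_eq_of_notMem _ _ _ hx]
      exact hnn x i
  · intro x
    by_cases hx : x ∈ σX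
    · rw [hψ', Set.piecewise_eq_of_mem _ _ _ hx]
      exact hΨsum _
    · rw [hψ', Set.piecewise_eq_of_notMem _ _ _ hx]
      exact hs1 x
  · intro x i hi
    by_cases hx : x ∈ σX
    · rw [hψ', Set.piecewise_eq_of_mem _ _ _ hx] at hi
      rcases hσWB x hx with hw | hb
      · have hiS : i ∈ S := by
          by_contra hiS
          exact hi (hΨsupp _ i hiS)
        have hspt := hWspt x hw
        have : i ∈ Finset.univ.filter fun j => ψ x j ≠ 0 := by
          rw [hspt]; exact hiS
        exact hcar x i (Finset.mem_filter.mp this).2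
      · rw [hrB x hb] at hi
        exact hcar x i hi
    · rw [hψ', Set.piecewise_eq_of_notMem _ _ _ hx] at hi
      exact hcar x i hi
  · intro x
    by_cases hx : x ∈ σX
    · right
      have : (Finset.univ.filter fun i => ψ' x i ≠ 0)
          = (Finset.univ.filter fun i => r x i ≠ 0) := by
        apply Finset.filter_congr
        intro i _
        rw [hψ', Set.piecewise_eq_of_mem _ _ _ hx]
      rw [this]
      exact hrsupp x
    · left
      constructor
      · apply Finset.filter_congr
        intro i _
        rw [hψ', Set.piecewise_eq_of_notMem _ _ _ hx]
      · intro hsub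
        apply hx
        intro i hiS
        by_contra hne
        exact hiS (hsub (Finset.mem_filter.mpr ⟨Finset.mem_univ _, hne⟩))
end SweepPush
noncomputable section Assemble
open Set

lemma covDim_of_absExtensor {X : Type} [TopologicalSpace X] [CompactSpace X]
    [TopologicalSpace.MetrizableSpace X] {n : ℕ}
    (hτ : ∀ m, n ≤ m → IsAbsExtensor X (↥(nSphere m))) : CovDimLE X n := by
  letI : MetricSpace X := TopologicalSpace.metrizableSpaceMetric X
  classical
  intro U hUfin hUopen hUcover
  rcases isEmpty_or_nonempty X with hXe | hXne
  · refine ⟨∅, Set.finite_empty, by simp, ?_, by simp, fun x => isEmptyElim x⟩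
    rw [Set.sUnion_empty]
    exact (Set.univ_eq_empty_iff.mpr hXe).symm
  letI : Fintype ↥U := hUfin.fintype
  have hUiunion : (Set.univ : Set X) ⊆ ⋃ i : ↥U, (i : Set X) := by
    rw [← Set.sUnion_eq_iUnion, hUcover]
  obtain ⟨f, hfsub⟩ := PartitionOfUnity.exists_isSubordinate isClosed_univ
    (fun i : ↥U => (i : Set X)) (fun i => hUopen _ i.2) hUiunion
  have hsum1 : ∀ x : X, ∑ i : ↥U, f i x = 1 := fun x => by
    have := f.sum_eq_one (Set.mem_univ x)
    rwa [finsum_eq_sum_of_fintype] at this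
  set φ : ↥U → X → ℝ := fun i x => f i x with hφ
  set Good : ℕ → (X → ↥U → ℝ) → Prop := fun d ψ =>
    Continuous ψ ∧ (∀ x i, 0 ≤ ψ x i) ∧ (∀ x, ∑ i, ψ x i = 1) ∧
    (∀ x, (Finset.univ.filter fun i => ψ x i ≠ 0).card ≤ d + 1) ∧
    (∀ x i, ψ x i ≠ 0 → φ i x ≠ 0) with hGood
  have base : ∃ ψ, Good (n + Fintype.card ↥U) ψ := by
    refine ⟨fun x i => f i x, continuous_pi (fun i => (f i).continuous),
      fun x i => f.nonneg i x, hsum1, fun x => ?_, fun x i h => h⟩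
    calc (Finset.univ.filter fun i => f i x ≠ 0).card
        ≤ Finset.univ.card := Finset.card_filter_le _ _
      _ = Fintype.card ↥U := rfl
      _ ≤ n + Fintype.card ↥U + 1 := by omega
  have step : ∀ d, n ≤ d → (∃ ψ, Good (d+1) ψ) → ∃ ψ, Good d ψ := by
    intro d hnd hex
    obtain ⟨ψ₀, hψc, hψnn, hψ1, hψcard, hψcar⟩ := hex
    have inner : ∀ 𝒮 : Finset (Finset ↥U), ∃ ψ' : X → ↥U → ℝ, Continuous ψ' ∧ (∀ x i, 0 ≤ ψ' x i) ∧
        (∀ x, ∑ i, ψ' x i = 1) ∧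
        (∀ x, (Finset.univ.filter fun i => ψ' x i ≠ 0).card ≤ d + 2) ∧
        (∀ x i, ψ' x i ≠ 0 → φ i x ≠ 0) ∧
        (∀ x, ∀ S ∈ 𝒮, S.card = d + 2 →
          (Finset.univ.filter fun i => ψ' x i ≠ 0) ≠ S) := by
      intro 𝒮
      induction 𝒮 using Finset.induction_on with
      | empty =>
        exact ⟨ψ₀, hψc, hψnn, hψ1, hψcard, hψcar,
          fun x S hS => absurd hS (Finset.notMem_empty S)⟩
      | @insert S 𝒮 hSmem ih =>
        obtain ⟨ψ₁, h1c, h1nn, h11, h1card, h1car, h1avoid⟩ := ih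
        by_cases hSc : S.card = d + 2
        · obtain ⟨ψ₂, h2c, h2nn, h21, h2car, h2supp⟩ :=
            sweep_push (hτ d hnd) φ ψ₁ S hSc h1c h1nn h11 h1card h1car
          refine ⟨ψ₂, h2c, h2nn, h21, ?_, h2car, ?_⟩
          · intro x
            rcases h2supp x with ⟨heq, -⟩ | hss
            · rw [heq]; exact h1card x
            · have := Finset.card_lt_card hss
              omega
          · intro x S' hmem hcS'
            rcases h2supp x with ⟨heq, hnsub⟩ | hss
            · rw [heq]
              rcases Finset.mem_insert.mp hmem with rfl | h
              · intro hcontr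
                exact hnsub (hcontr ▸ Finset.Subset.refl _)
              · exact h1avoid x S' h hcS'
            · intro hcontr
              have h1 := Finset.card_lt_card hss
              rw [hcontr, hcS', hSc] at h1
              omega
        · refine ⟨ψ₁, h1c, h1nn, h11, h1card, h1car, ?_⟩
          intro x S' hmem hcS'
          rcases Finset.mem_insert.mp hmem with rfl | h
          · exact absurd hcS' hSc
          · exact h1avoid x S' h hcS'
    obtain ⟨ψ', h'c, h'nn, h'1, h'card, h'car, h'avoid⟩ := inner Finset.univ
    refine ⟨ψ', h'c, h'nn, h'1, fun x => ?_, h'car⟩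
    have hle := h'card x
    rcases Nat.lt_or_ge ((Finset.univ.filter fun i => ψ' x i ≠ 0).card) (d+2) with h | h
    · omega
    · exfalso
      have hceq : (Finset.univ.filter fun i => ψ' x i ≠ 0).card = d + 2 := by omega
      exact h'avoid x _ (Finset.mem_univ _) hceq rfl
  have desc : ∀ j : ℕ, ∃ ψ, Good (n + (Fintype.card ↥U - j)) ψ := by
    intro j
    induction j with
    | zero => simpa using base
    | succ j ihj =>
      rcases le_or_gt (Fintype.card ↥U) j with hle | hlt
      · have heq : Fintype.card ↥U - (j+1) = Fintype.card ↥U - j := by omega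
        rw [heq]
        exact ihj
      · apply step _ (Nat.le_add_right n _)
        have heq : n + (Fintype.card ↥U - (j+1)) + 1 = n + (Fintype.card ↥U - j) := by omega
        rw [heq]
        exact ihj
  have final := desc (Fintype.card ↥U)
  rw [Nat.sub_self, Nat.add_zero] at final
  obtain ⟨ψ, hψc, hψnn, hψ1, hψcard, hψcar⟩ := final
  set V : Set (Set X) := Set.range (fun i : ↥U => {x : X | 0 < ψ x i}) with hV
  refine ⟨V, Set.finite_range _, ?_, ?_, ?_, ?_⟩
  · rintro v ⟨i, rfl⟩
    exact isOpen_lt continuous_const ((continuous_apply i).comp hψc)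
  · apply Set.eq_univ_of_univ_subset
    intro x _
    have h1 : ∑ i, ψ x i = 1 := hψ1 x
    have hex : ∃ i, ψ x i ≠ 0 := by
      by_contra hno
      push_neg at hno
      rw [Finset.sum_congr rfl (fun i _ => hno i)] at h1
      simp at h1
    obtain ⟨i, hi⟩ := hex
    exact ⟨{x | 0 < ψ x i}, ⟨i, rfl⟩, lt_of_le_of_ne (hψnn x i) (Ne.symm hi)⟩
  · rintro v ⟨i, rfl⟩
    refine ⟨↑i, i.2, ?_⟩
    intro x hx
    have hne : ψ x i ≠ 0 := ne_of_gt hx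
    exact hfsub i (subset_tsupport _ (hψcar x i hne))
  · intro x
    have hsub : {v | v ∈ V ∧ x ∈ v} ⊆ (fun i : ↥U => {x : X | 0 < ψ x i}) ''
        {i : ↥U | ψ x i ≠ 0} := by
      rintro v ⟨⟨i, rfl⟩, hxv⟩
      exact ⟨i, ne_of_gt hxv, rfl⟩
    calc {v | v ∈ V ∧ x ∈ v}.ncard
        ≤ ((fun i : ↥U => {x : X | 0 < ψ x i}) '' {i : ↥U | ψ x i ≠ 0}).ncard :=
          Set.ncard_le_ncard hsub (Set.toFinite _)
      _ ≤ {i : ↥U | ψ x i ≠ 0}.ncard := Set.ncard_image_le (Set.toFinite _)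
      _ = (Finset.univ.filter fun i => ψ x i ≠ 0).card := by
          rw [← Set.ncard_coe_finset]
          congr 1
          ext i
          simp
      _ ≤ n + 1 := hψcard x

end Assemble

/-- For a compact metrizable space `X`, the sphere `Sⁿ` is an absolute
extensor for `X` iff the covering dimension of `X` is at most `n`. -/
theorem sphere_absolute_extensor_iff_covDim_le
    (X : Type) [TopologicalSpace X] [CompactSpace X]
    [TopologicalSpace.MetrizableSpace X] (n : ℕ) :
    IsAbsExtensor X (↥(nSphere n)) ↔ CovDimLE X n := by
  constructor
  · intro hτ
    apply covDim_of_absExtensor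
    intro m hm
    exact absExtensor_of_niceP (niceP_mono hm (niceP_of_absExtensor hτ))
  · intro hdim
    exact absExtensor_of_niceP (niceP_of_covDim hdim)
end CovDimToNiceP
end GPaux
end
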